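/- arXiv:2403.00392 — 7 statements merged into one kernel-verified Lean document; each statement's English description precedes it below -/
import Mathlib

section
/- Every sparse graph G=(V,E) admits exactly one max-tight decomposition: there exists a family {G_i=(V_i,E_i)}_{i∈I} of subgraphs of G that is a max-tight decomposition for G, and any two max-tight decompositions for G consist of the same set of subgraphs. -/
open scoped Classical

noncomputable section

/-- The squared distance function on `ℂ²`. -/
def sd (x y : ℂ × ℂ) : ℂ := (x.1 - y.1) ^ 2 + (x.2 - y.2) ^ 2

/-- Membership in the transformation group `T`. -/
def IsTransf (t : ℂ × ℂ → ℂ × ℂ) : Prop :=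
  ∃ c s u v : ℂ, c ^ 2 + s ^ 2 = 1 ∧
    ∀ x, t x = (c * x.1 - s * x.2 + u, s * x.1 + c * x.2 + v)

variable {α : Type*} [DecidableEq α]

/-- `(V, E)` is a finite simple undirected graph: edges are non-diagonal
unordered pairs with both endpoints in `V`. -/
def IsGraph (V : Finset α) (E : Finset (Sym2 α)) : Prop :=
  ∀ e ∈ E, ¬ e.IsDiag ∧ ∀ v ∈ e, v ∈ V

/-- `(V', E')` is a subgraph of `(V, E)`. -/
def IsSubgraph (V' : Finset α) (E' : Finset (Sym2 α))
    (V : Finset α) (E : Finset (Sym2 α)) : Prop :=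
  IsGraph V' E' ∧ V' ⊆ V ∧ E' ⊆ E

/-- A graph is sparse if every subgraph `(V', E')` with `|V'| ≥ 2`
satisfies `|E'| ≤ 2|V'| - 3`. -/
def IsSparse (V : Finset α) (E : Finset (Sym2 α)) : Prop :=
  IsGraph V E ∧ ∀ V' E', IsSubgraph V' E' V E → 2 ≤ V'.card →
    (E'.card : ℤ) ≤ 2 * V'.card - 3

/-- A graph is tight if it is sparse and `|V| = 1` or `|E| = 2|V| - 3`. -/
def IsTight (V : Finset α) (E : Finset (Sym2 α)) : Prop :=
  IsSparse V E ∧ (V.card = 1 ∨ (E.card : ℤ) = 2 * V.card - 3)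

/-- `(V', E')` is a max-tight subgraph of `(V, E)`. -/
def IsMaxTight (V' : Finset α) (E' : Finset (Sym2 α))
    (V : Finset α) (E : Finset (Sym2 α)) : Prop :=
  IsSubgraph V' E' V E ∧ IsTight V' E' ∧
    ∀ V'' E'', IsSubgraph V'' E'' V E → IsTight V'' E'' →
      V' ⊆ V'' → E' ⊆ E'' → V' = V'' ∧ E' = E''

/-- `{(Vi i, Ei i)}_{i ∈ I}` is a max-tight decomposition of `(V, E)`. -/
def IsMaxTightDecomp {I : Type*} (V : Finset α) (E : Finset (Sym2 α))
    (Vi : I → Finset α) (Ei : I → Finset (Sym2 α)) : Prop :=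
  (∀ i, IsMaxTight (Vi i) (Ei i) V E) ∧
  (∀ v ∈ V, ∃ i, v ∈ Vi i) ∧
  (∀ e ∈ E, ∃ i, e ∈ Ei i) ∧
  (∀ i j, i ≠ j → ∀ e, ¬ (e ∈ Ei i ∧ e ∈ Ei j))

/-- Extend a realization of `V` to all of `α` (by zero off `V`). -/
def extendR (V : Finset α) (r : ↥V → ℂ × ℂ) : α → ℂ × ℂ :=
  fun a => if h : a ∈ V then r ⟨a, h⟩ else 0

/-- The squared distance along an unordered pair of vertices. -/
def edgeVal (r : α → ℂ × ℂ) : Sym2 α → ℂ :=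
  Sym2.lift ⟨fun u v => sd (r u) (r v), fun u v => by simp only [sd]; ring⟩

/-- The edge map `E_G : (ℂ²)^V → ℂ^E`. -/
def edgeMap (V : Finset α) (E : Finset (Sym2 α)) (r : ↥V → ℂ × ℂ) :
    {e // e ∈ E} → ℂ :=
  fun e => edgeVal (extendR V r) e.1

/-- The set `E_G⁻¹(λ)` of `λ`-compatible realizations. -/
def fiber (V : Finset α) (E : Finset (Sym2 α)) (lam : {e // e ∈ E} → ℂ) :
    Set (↥V → ℂ × ℂ) :=
  {r | edgeMap V E r = lam}

/-- The set of equivalence classes of `S` under `r ∼ s ↔ ∃ t ∈ T, s = t ∘ r`. -/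
def TClasses {β : Type*} (S : Set (β → ℂ × ℂ)) : Set (Set (β → ℂ × ℂ)) :=
  {C | ∃ r ∈ S, C = {s | s ∈ S ∧ ∃ t, IsTransf t ∧ s = fun v => t (r v)}}

/-- The coordinates of a realization, as a point of affine space with
coordinate ring `ℂ[x_v, y_v : v ∈ β]`. -/
def coords {β : Type*} (r : β → ℂ × ℂ) : β × Fin 2 → ℂ :=
  fun p => if p.2 = 0 then (r p.1).1 else (r p.1).2

/-- The vanishing ideal of a set of realizations in `ℂ[x_v, y_v : v ∈ β]`. -/
def vanishingIdeal {β : Type*} (S : Set (β → ℂ × ℂ)) :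
    Ideal (MvPolynomial (β × Fin 2) ℂ) where
  carrier := {f | ∀ r ∈ S, MvPolynomial.eval (coords r) f = 0}
  add_mem' := by
    intro a b ha hb r hr
    simp only [Set.mem_setOf_eq] at ha hb ⊢
    simp [map_add, ha r hr, hb r hr]
  zero_mem' := by intro r hr; simp
  smul_mem' := by
    intro c f hf r hr
    simp only [Set.mem_setOf_eq] at hf ⊢
    simp [smul_eq_mul, map_mul, hf r hr]

end

section MTHelpers

variable {α : Type*} [DecidableEq α]

lemma mt_subgraph_trans {V1 V2 V3 : Finset α} {E1 E2 E3 : Finset (Sym2 α)}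
    (h12 : IsSubgraph V1 E1 V2 E2) (h23 : IsSubgraph V2 E2 V3 E3) :
    IsSubgraph V1 E1 V3 E3 :=
  ⟨h12.1, h12.2.1.trans h23.2.1, h12.2.2.trans h23.2.2⟩

lemma mt_sparse_of_subgraph {V' V : Finset α} {E' E : Finset (Sym2 α)}
    (hs : IsSparse V E) (h : IsSubgraph V' E' V E) : IsSparse V' E' := by
  refine ⟨h.1, fun V'' E'' hsub hc => hs.2 V'' E'' (mt_subgraph_trans hsub h) hc⟩

/-- Every tight subgraph extends to a max-tight subgraph. -/
lemma mt_exists_maxTight_ext {V V' : Finset α} {E E' : Finset (Sym2 α)}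
    (hsub : IsSubgraph V' E' V E) (ht : IsTight V' E') :
    ∃ W F, IsMaxTight W F V E ∧ V' ⊆ W ∧ E' ⊆ F := by
  classical
  set S : Finset (Finset α × Finset (Sym2 α)) :=
    (V.powerset ×ˢ E.powerset).filter
      (fun p => IsSubgraph p.1 p.2 V E ∧ IsTight p.1 p.2 ∧ V' ⊆ p.1 ∧ E' ⊆ p.2) with hS
  have hmem : ∀ p : Finset α × Finset (Sym2 α), p ∈ S ↔
      IsSubgraph p.1 p.2 V E ∧ IsTight p.1 p.2 ∧ V' ⊆ p.1 ∧ E' ⊆ p.2 := by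
    intro p
    simp only [hS, Finset.mem_filter, Finset.mem_product, Finset.mem_powerset,
      and_iff_right_iff_imp]
    rintro ⟨h1, -, -⟩
    exact ⟨h1.2.1, h1.2.2⟩
  have hne : S.Nonempty := ⟨(V', E'), (hmem _).2 ⟨hsub, ht, subset_rfl, subset_rfl⟩⟩
  obtain ⟨p, hp, hmax⟩ := S.exists_max_image (fun p => p.1.card + p.2.card) hne
  rw [hmem] at hp
  obtain ⟨hp1, hp2, hp3, hp4⟩ := hp
  refine ⟨p.1, p.2, ⟨hp1, hp2, ?_⟩, hp3, hp4⟩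
  intro V'' E'' hsub'' ht'' hV'' hE''
  have hmem'' : (V'', E'') ∈ S :=
    (hmem _).2 ⟨hsub'', ht'', hp3.trans hV'', hp4.trans hE''⟩
  have hle := hmax _ hmem''
  have h1 : p.1.card ≤ V''.card := Finset.card_le_card hV''
  have h2 : p.2.card ≤ E''.card := Finset.card_le_card hE''
  simp only at hle
  constructor
  · exact Finset.eq_of_subset_of_card_le hV'' (by omega)
  · exact Finset.eq_of_subset_of_card_le hE'' (by omega)

/-- The union of two tight subgraphs sharing at least two vertices is tight. -/
lemma mt_union_tight {V V1 V2 : Finset α} {E E1 E2 : Finset (Sym2 α)}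
    (hs : IsSparse V E)
    (h1 : IsSubgraph V1 E1 V E) (ht1 : IsTight V1 E1)
    (h2 : IsSubgraph V2 E2 V E) (ht2 : IsTight V2 E2)
    (hcap : 2 ≤ (V1 ∩ V2).card) :
    IsSubgraph (V1 ∪ V2) (E1 ∪ E2) V E ∧ IsTight (V1 ∪ V2) (E1 ∪ E2) := by
  have hgU : IsGraph (V1 ∪ V2) (E1 ∪ E2) := by
    intro e he
    rcases Finset.mem_union.1 he with h | h
    · exact ⟨(h1.1 e h).1, fun v hv => Finset.mem_union_left _ ((h1.1 e h).2 v hv)⟩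
    · exact ⟨(h2.1 e h).1, fun v hv => Finset.mem_union_right _ ((h2.1 e h).2 v hv)⟩
  have hsubU : IsSubgraph (V1 ∪ V2) (E1 ∪ E2) V E :=
    ⟨hgU, Finset.union_subset h1.2.1 h2.2.1, Finset.union_subset h1.2.2 h2.2.2⟩
  refine ⟨hsubU, mt_sparse_of_subgraph hs hsubU, ?_⟩
  -- both have at least two vertices
  have hc1 : 2 ≤ V1.card := hcap.trans (Finset.card_le_card Finset.inter_subset_left)
  have hc2 : 2 ≤ V2.card := hcap.trans (Finset.card_le_card Finset.inter_subset_right)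
  have hE1 : (E1.card : ℤ) = 2 * V1.card - 3 := by
    rcases ht1.2 with h | h
    · omega
    · exact h
  have hE2 : (E2.card : ℤ) = 2 * V2.card - 3 := by
    rcases ht2.2 with h | h
    · omega
    · exact h
  -- intersection is a subgraph
  have hsubI : IsSubgraph (V1 ∩ V2) (E1 ∩ E2) V E := by
    refine ⟨?_, Finset.inter_subset_left.trans h1.2.1, Finset.inter_subset_left.trans h1.2.2⟩
    intro e he
    rw [Finset.mem_inter] at he
    exact ⟨(h1.1 e he.1).1, fun v hv =>
      Finset.mem_inter.2 ⟨(h1.1 e he.1).2 v hv, (h2.1 e he.2).2 v hv⟩⟩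
  have hEI : ((E1 ∩ E2).card : ℤ) ≤ 2 * (V1 ∩ V2).card - 3 := hs.2 _ _ hsubI hcap
  have hcU : 2 ≤ (V1 ∪ V2).card :=
    hcap.trans (Finset.card_le_card ((Finset.inter_subset_left).trans Finset.subset_union_left))
  have hEU : ((E1 ∪ E2).card : ℤ) ≤ 2 * (V1 ∪ V2).card - 3 :=
    hs.2 _ _ hsubU hcU
  have hVcard := Finset.card_union_add_card_inter V1 V2
  have hEcard := Finset.card_union_add_card_inter E1 E2
  right
  have hVcard' : ((V1 ∪ V2).card : ℤ) + (V1 ∩ V2).card = V1.card + V2.card := by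
    exact_mod_cast hVcard
  have hEcard' : ((E1 ∪ E2).card : ℤ) + (E1 ∩ E2).card = E1.card + E2.card := by
    exact_mod_cast hEcard
  omega

/-- Two max-tight subgraphs sharing an edge coincide. -/
lemma mt_maxTight_eq_of_shared_edge {V V1 V2 : Finset α} {E E1 E2 : Finset (Sym2 α)}
    (hs : IsSparse V E)
    (h1 : IsMaxTight V1 E1 V E) (h2 : IsMaxTight V2 E2 V E)
    {e : Sym2 α} (he1 : e ∈ E1) (he2 : e ∈ E2) : V1 = V2 ∧ E1 = E2 := by
  obtain ⟨hnd, hve⟩ := h1.1.1 e he1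
  obtain ⟨a, b⟩ := e
  rw [Sym2.mk_isDiag_iff] at hnd
  have hab : a ∈ V1 ∩ V2 ∧ b ∈ V1 ∩ V2 := by
    constructor <;> refine Finset.mem_inter.2 ⟨?_, ?_⟩
    · exact (h1.1.1 _ he1).2 a (by simp)
    · exact (h2.1.1 _ he2).2 a (by simp)
    · exact (h1.1.1 _ he1).2 b (by simp)
    · exact (h2.1.1 _ he2).2 b (by simp)
  have hcap : 2 ≤ (V1 ∩ V2).card := by
    have := Finset.one_lt_card.2 ⟨a, hab.1, b, hab.2, hnd⟩
    omega
  obtain ⟨hsubU, htU⟩ := mt_union_tight hs h1.1 h1.2.1 h2.1 h2.2.1 hcap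
  have e1 := h1.2.2 _ _ hsubU htU Finset.subset_union_left Finset.subset_union_left
  have e2 := h2.2.2 _ _ hsubU htU Finset.subset_union_right Finset.subset_union_right
  exact ⟨e1.1.trans e2.1.symm, e1.2.trans e2.2.symm⟩

/-- The single-edge subgraph on an edge of the graph is tight. -/
lemma mt_pair_tight {V : Finset α} {E : Finset (Sym2 α)} (hs : IsSparse V E)
    {u v : α} (huv : u ≠ v) (he : s(u, v) ∈ E) :
    IsSubgraph {u, v} {s(u, v)} V E ∧ IsTight {u, v} {s(u, v)} := by
  have hg : IsGraph ({u, v} : Finset α) {s(u, v)} := by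
    intro e he'
    rw [Finset.mem_singleton] at he'
    subst he'
    refine ⟨by simp [Sym2.mk_isDiag_iff, huv], fun w hw => ?_⟩
    rw [Sym2.mem_iff] at hw
    rcases hw with h | h <;> simp [h]
  have hsub : IsSubgraph ({u, v} : Finset α) {s(u, v)} V E := by
    refine ⟨hg, ?_, Finset.singleton_subset_iff.2 he⟩
    have := (hs.1 _ he).2
    intro w hw
    rcases Finset.mem_insert.1 hw with h | h
    · rw [h]; exact this u (by simp)
    · rw [Finset.mem_singleton] at h; rw [h]; exact this v (by simp)
  refine ⟨hsub, mt_sparse_of_subgraph hs hsub, Or.inr ?_⟩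
  rw [Finset.card_singleton, Finset.card_insert_of_notMem (by simp [huv]),
    Finset.card_singleton]
  norm_num

/-- The single-vertex subgraph is tight. -/
lemma mt_singleton_tight {V : Finset α} {E : Finset (Sym2 α)} (hs : IsSparse V E)
    {v : α} (hv : v ∈ V) :
    IsSubgraph {v} ∅ V E ∧ IsTight {v} ∅ := by
  have hsub : IsSubgraph ({v} : Finset α) (∅ : Finset (Sym2 α)) V E :=
    ⟨fun e he => absurd he (Finset.notMem_empty e),
      Finset.singleton_subset_iff.2 hv, Finset.empty_subset _⟩
  exact ⟨hsub, mt_sparse_of_subgraph hs hsub, Or.inl (Finset.card_singleton v)⟩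

/-- A max-tight subgraph with no edges is a single vertex. -/
lemma mt_maxTight_empty_edges {V W : Finset α} {E F : Finset (Sym2 α)}
    (hmt : IsMaxTight W F V E) (hF : F = ∅) : ∃ v, W = {v} := by
  have := hmt.2.1.2
  rcases this with h | h
  · exact Finset.card_eq_one.1 h
  · exfalso
    rw [hF] at h
    simp only [Finset.card_empty, Nat.cast_zero] at h
    omega

/-- A max-tight subgraph containing an isolated vertex is the singleton. -/
lemma mt_maxTight_of_isolated {V W : Finset α} {E F : Finset (Sym2 α)}
    (hs : IsSparse V E) {v : α}
    (hiso : ∀ e ∈ E, v ∉ e)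
    (hmt : IsMaxTight W F V E) (hvW : v ∈ W) : W = {v} ∧ F = ∅ := by
  have hFE : F ⊆ E := hmt.1.2.2
  have hFempty : F = ∅ := by
    by_contra hne
    obtain ⟨e, he⟩ := Finset.nonempty_iff_ne_empty.2 hne
    obtain ⟨hnd, hve⟩ := hmt.1.1 e he
    -- endpoints of edges of F avoid v and lie in W.erase v
    have hW' : ∀ e' ∈ F, ∀ w ∈ e', w ∈ W.erase v := by
      intro e' he' w hw
      refine Finset.mem_erase.2 ⟨?_, (hmt.1.1 e' he').2 w hw⟩
      rintro rfl
      exact hiso e' (hFE he') hw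
    have hsub' : IsSubgraph (W.erase v) F V E :=
      ⟨fun e' he' => ⟨(hmt.1.1 e' he').1, hW' e' he'⟩,
        (Finset.erase_subset v W).trans hmt.1.2.1, hFE⟩
    obtain ⟨a, b⟩ := e
    rw [Sym2.mk_isDiag_iff] at hnd
    have ha : a ∈ W.erase v := hW' _ he a (by simp)
    have hb : b ∈ W.erase v := hW' _ he b (by simp)
    have hc2 : 2 ≤ (W.erase v).card := by
      have := Finset.one_lt_card.2 ⟨a, ha, b, hb, hnd⟩
      omega
    have hle : (F.card : ℤ) ≤ 2 * (W.erase v).card - 3 := hs.2 _ _ hsub' hc2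
    have hWcard : (W.erase v).card = W.card - 1 := Finset.card_erase_of_mem hvW
    have hWge : 1 ≤ W.card := Finset.card_pos.2 ⟨v, hvW⟩
    rcases hmt.2.1.2 with h | h
    · -- W is a singleton {v}; an edge of F lies within {v}, contradicting non-diag
      have : W = {v} := by
        obtain ⟨w, hw⟩ := Finset.card_eq_one.1 h
        rw [hw] at hvW
        rw [Finset.mem_singleton] at hvW
        rw [hw, hvW]
      rw [this] at ha
      simp at ha
    · have h1 : ((W.erase v).card : ℤ) = (W.card : ℤ) - 1 := by
        rw [hWcard]; push_cast [hWge]; omega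
      omega
  obtain ⟨w, hw⟩ := mt_maxTight_empty_edges hmt hFempty
  rw [hw] at hvW
  rw [Finset.mem_singleton] at hvW
  subst hvW
  exact ⟨hw, hFempty⟩

/-- Any max-tight subgraph appears in any max-tight decomposition. -/
lemma mt_maxTight_mem_range {V W : Finset α} {E F : Finset (Sym2 α)}
    (hs : IsSparse V E) {I : Type*} {Vi : I → Finset α} {Ei : I → Finset (Sym2 α)}
    (hd : IsMaxTightDecomp V E Vi Ei) (hmt : IsMaxTight W F V E) :
    ∃ i, Vi i = W ∧ Ei i = F := by
  rcases eq_or_ne F ∅ with hF | hF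
  · -- W = {v} for some v; v must be isolated
    obtain ⟨v, hv⟩ := mt_maxTight_empty_edges hmt hF
    have hvV : v ∈ V := hmt.1.2.1 (by rw [hv]; simp)
    have hiso : ∀ e ∈ E, v ∉ e := by
      intro e he hv'
      obtain ⟨hnd, -⟩ := hs.1 e he
      induction e with
      | _ a b =>
        rw [Sym2.mk_isDiag_iff] at hnd
        rw [Sym2.mem_iff] at hv'
        -- WLOG v = a
        have : ∃ u, u ≠ v ∧ s(v, u) ∈ E := by
          rcases hv' with rfl | rfl
          · exact ⟨b, fun h => hnd h.symm, he⟩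
          · exact ⟨a, fun h => hnd h, by rwa [Sym2.eq_swap]⟩
        obtain ⟨u, huv, hvu⟩ := this
        obtain ⟨hsubP, htP⟩ := mt_pair_tight hs (fun h => huv h.symm) hvu
        have := hmt.2.2 _ _ hsubP htP
          (by rw [hv]; exact Finset.singleton_subset_iff.2 (by simp))
          (by rw [hF]; exact Finset.empty_subset _)
        rw [hF] at this
        exact Finset.singleton_ne_empty _ this.2.symm
    obtain ⟨i, hi⟩ := hd.2.1 v hvV
    obtain ⟨h1, h2⟩ := mt_maxTight_of_isolated hs hiso (hd.1 i) hi
    exact ⟨i, by rw [h1, hv], by rw [h2, hF]⟩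
  · obtain ⟨e, he⟩ := Finset.nonempty_iff_ne_empty.2 hF
    obtain ⟨i, hi⟩ := hd.2.2.1 e (hmt.1.2.2 he)
    obtain ⟨h1, h2⟩ := mt_maxTight_eq_of_shared_edge hs (hd.1 i) hmt hi he
    exact ⟨i, h1, h2⟩

lemma mt_range_eq {V : Finset α} {E : Finset (Sym2 α)}
    (hs : IsSparse V E) {I : Type*} {Vi : I → Finset α} {Ei : I → Finset (Sym2 α)}
    (hd : IsMaxTightDecomp V E Vi Ei) :
    Set.range (fun i => (Vi i, Ei i)) =
      {p : Finset α × Finset (Sym2 α) | IsMaxTight p.1 p.2 V E} := by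
  ext p
  constructor
  · rintro ⟨i, rfl⟩
    exact hd.1 i
  · intro hp
    obtain ⟨i, h1, h2⟩ := mt_maxTight_mem_range hs hd hp
    exact ⟨i, by simp [h1, h2]⟩

end MTHelpers

/-- Every sparse graph admits a max-tight decomposition, and
any two max-tight decompositions consist of the same set of subgraphs. -/
theorem maxTight_decomposition_exists_unique
    {α : Type*} [DecidableEq α]
    (V : Finset α) (E : Finset (Sym2 α)) (hSparse : IsSparse V E) :
    (∃ (I : Type) (_ : Fintype I) (Vi : I → Finset α) (Ei : I → Finset (Sym2 α)),
        IsMaxTightDecomp V E Vi Ei) ∧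
    (∀ {I J : Type} (Vi : I → Finset α) (Ei : I → Finset (Sym2 α))
        (Wj : J → Finset α) (Fj : J → Finset (Sym2 α)),
        IsMaxTightDecomp V E Vi Ei → IsMaxTightDecomp V E Wj Fj →
        Set.range (fun i => (Vi i, Ei i)) = Set.range (fun j => (Wj j, Fj j))) := by
  classical
  constructor
  · -- existence
    set M : Finset (Finset α × Finset (Sym2 α)) :=
      (V.powerset ×ˢ E.powerset).filter (fun p => IsMaxTight p.1 p.2 V E) with hM
    have hmemM : ∀ p : Finset α × Finset (Sym2 α), p ∈ M ↔ IsMaxTight p.1 p.2 V E := by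
      intro p
      simp only [hM, Finset.mem_filter, Finset.mem_product, Finset.mem_powerset,
        and_iff_right_iff_imp]
      intro h
      exact ⟨h.1.2.1, h.1.2.2⟩
    refine ⟨Fin M.card, inferInstance,
      fun i => ((M.equivFin.symm i : M) : Finset α × Finset (Sym2 α)).1,
      fun i => ((M.equivFin.symm i : M) : Finset α × Finset (Sym2 α)).2,
      ?_, ?_, ?_, ?_⟩
    · intro i
      exact (hmemM _).1 (M.equivFin.symm i).2
    · intro v hv
      obtain ⟨hsub, ht⟩ := mt_singleton_tight hSparse hv
      obtain ⟨W, F, hmt, hVW, -⟩ := mt_exists_maxTight_ext hsub ht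
      have hWF : (W, F) ∈ M := (hmemM _).2 hmt
      refine ⟨M.equivFin ⟨(W, F), hWF⟩, ?_⟩
      simp only [Equiv.symm_apply_apply]
      exact hVW (Finset.mem_singleton_self v)
    · intro e he
      obtain ⟨hnd, -⟩ := hSparse.1 e he
      induction e with
      | _ a b =>
        rw [Sym2.mk_isDiag_iff] at hnd
        obtain ⟨hsub, ht⟩ := mt_pair_tight hSparse hnd he
        obtain ⟨W, F, hmt, -, hEF⟩ := mt_exists_maxTight_ext hsub ht
        have hWF : (W, F) ∈ M := (hmemM _).2 hmt
        refine ⟨M.equivFin ⟨(W, F), hWF⟩, ?_⟩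
        simp only [Equiv.symm_apply_apply]
        exact hEF (Finset.mem_singleton_self _)
    · intro i j hij e ⟨hei, hej⟩
      have h1 := (hmemM _).1 (M.equivFin.symm i).2
      have h2 := (hmemM _).1 (M.equivFin.symm j).2
      obtain ⟨hV', hE'⟩ := mt_maxTight_eq_of_shared_edge hSparse h1 h2 hei hej
      apply hij
      have : (M.equivFin.symm i : M) = (M.equivFin.symm j : M) := by
        apply Subtype.ext
        exact Prod.ext hV' hE'
      exact M.equivFin.symm.injective this
  · -- uniqueness
    intro I J Vi Ei Wj Fj hd1 hd2
    rw [mt_range_eq hSparse hd1, mt_range_eq hSparse hd2]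
end

section
/- Let G=(V,E) be a sparse graph and let G₁=(V₁,E₁) and G₂=(V₂,E₂) be tight subgraphs of G with E₁ ∩ E₂ ≠ ∅ (they have a common edge). Then the union (V₁∪V₂, E₁∪E₂) is a tight subgraph of G. -/
open scoped Classical

/-- In a sparse graph, the union of two tight subgraphs with a
common edge is again a tight subgraph. -/
theorem union_of_tight_subgraphs_with_common_edge_is_tight
    {α : Type*} [DecidableEq α]
    (V : Finset α) (E : Finset (Sym2 α))
    (V1 V2 : Finset α) (E1 E2 : Finset (Sym2 α))
    (hSparse : IsSparse V E)
    (h1 : IsSubgraph V1 E1 V E) (h2 : IsSubgraph V2 E2 V E)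
    (ht1 : IsTight V1 E1) (ht2 : IsTight V2 E2)
    (hcommon : (E1 ∩ E2).Nonempty) :
    IsSubgraph (V1 ∪ V2) (E1 ∪ E2) V E ∧ IsTight (V1 ∪ V2) (E1 ∪ E2) := by
  classical
  obtain ⟨e, he⟩ := hcommon
  have he1 : e ∈ E1 := (Finset.mem_inter.mp he).1
  have he2 : e ∈ E2 := (Finset.mem_inter.mp he).2
  -- union is a graph and subgraph
  have hGu : IsGraph (V1 ∪ V2) (E1 ∪ E2) := by
    intro f hf
    rcases Finset.mem_union.mp hf with hf1 | hf1
    · exact ⟨(h1.1 f hf1).1, fun v hv => Finset.mem_union_left _ ((h1.1 f hf1).2 v hv)⟩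
    · exact ⟨(h2.1 f hf1).1, fun v hv => Finset.mem_union_right _ ((h2.1 f hf1).2 v hv)⟩
  have hsubU : IsSubgraph (V1 ∪ V2) (E1 ∪ E2) V E :=
    ⟨hGu, Finset.union_subset h1.2.1 h2.2.1, Finset.union_subset h1.2.2 h2.2.2⟩
  -- endpoints of the common edge
  obtain ⟨⟨u, v⟩, rfl⟩ := e.exists_rep
  have hmku : u ∈ Sym2.mk u v := Sym2.mem_mk_left u v
  have hmkv : v ∈ Sym2.mk u v := Sym2.mem_mk_right u v
  have huv : u ≠ v := by
    have := (h1.1 _ he1).1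
    simpa [Sym2.mk_isDiag_iff] using this
  have hu1 : u ∈ V1 := (h1.1 _ he1).2 u hmku
  have hv1 : v ∈ V1 := (h1.1 _ he1).2 v hmkv
  have hu2 : u ∈ V2 := (h2.1 _ he2).2 u hmku
  have hv2 : v ∈ V2 := (h2.1 _ he2).2 v hmkv
  have hc1 : 2 ≤ V1.card := Finset.one_lt_card_iff.mpr ⟨u, v, hu1, hv1, huv⟩
  have hc2 : 2 ≤ V2.card := Finset.one_lt_card_iff.mpr ⟨u, v, hu2, hv2, huv⟩
  have hcI : 2 ≤ (V1 ∩ V2).card :=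
    Finset.one_lt_card_iff.mpr ⟨u, v, Finset.mem_inter.mpr ⟨hu1, hu2⟩,
      Finset.mem_inter.mpr ⟨hv1, hv2⟩, huv⟩
  have hcU : 2 ≤ (V1 ∪ V2).card :=
    le_trans hc1 (Finset.card_le_card Finset.subset_union_left)
  -- tight counts
  have hE1 : (E1.card : ℤ) = 2 * V1.card - 3 := by
    rcases ht1.2 with h | h
    · omega
    · exact h
  have hE2 : (E2.card : ℤ) = 2 * V2.card - 3 := by
    rcases ht2.2 with h | h
    · omega
    · exact h
  -- intersection is a subgraph of G
  have hsubI : IsSubgraph (V1 ∩ V2) (E1 ∩ E2) V E := by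
    refine ⟨?_, Finset.Subset.trans Finset.inter_subset_left h1.2.1,
      Finset.Subset.trans Finset.inter_subset_left h1.2.2⟩
    intro f hf
    have hf1 := (h1.1 f (Finset.mem_inter.mp hf).1)
    have hf2 := (h2.1 f (Finset.mem_inter.mp hf).2)
    exact ⟨hf1.1, fun w hw => Finset.mem_inter.mpr ⟨hf1.2 w hw, hf2.2 w hw⟩⟩
  have hIbound : ((E1 ∩ E2).card : ℤ) ≤ 2 * (V1 ∩ V2).card - 3 :=
    hSparse.2 _ _ hsubI hcI
  have hUbound : ((E1 ∪ E2).card : ℤ) ≤ 2 * (V1 ∪ V2).card - 3 :=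
    hSparse.2 _ _ hsubU hcU
  have hVcard : (V1 ∪ V2).card + (V1 ∩ V2).card = V1.card + V2.card :=
    Finset.card_union_add_card_inter V1 V2
  have hEcard : (E1 ∪ E2).card + (E1 ∩ E2).card = E1.card + E2.card :=
    Finset.card_union_add_card_inter E1 E2
  refine ⟨hsubU, ⟨⟨hGu, ?_⟩, ?_⟩⟩
  · intro V' E' hsub' hc'
    exact hSparse.2 V' E'
      ⟨hsub'.1, hsub'.2.1.trans hsubU.2.1, hsub'.2.2.trans hsubU.2.2⟩ hc'
  · right
    have hVc : ((V1 ∪ V2).card : ℤ) + (V1 ∩ V2).card = V1.card + V2.card := by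
      exact_mod_cast hVcard
    have hEc : ((E1 ∪ E2).card : ℤ) + (E1 ∩ E2).card = E1.card + E2.card := by
      exact_mod_cast hEcard
    linarith
end

section
/- If G=(V,E) is a graph that is not sparse, then there exists a nonzero polynomial F in the variables (x_e)_{e∈E} over ℂ such that for every λ ∈ ℂ^E with F(λ) ≠ 0 the set E_G⁻¹(λ) of λ-compatible realizations is empty. -/
open scoped Classical

open MvPolynomial

theorem auxNum (k m : ℕ) (hk : 1 ≤ k) (hkm : 2*k ≤ m) :
    (m*(m^(2*k-1))+1)^(2*k-1) < (m^(2*k-1)+1)^m := by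
  have hm2 : 2 ≤ m := le_trans (by omega) hkm
  set a := m^(2*k-1) with ha
  have hapos : 0 < a := by positivity
  have h1 : m*a+1 ≤ m*(a+1) := by nlinarith
  calc (m*a+1)^(2*k-1) ≤ (m*(a+1))^(2*k-1) := Nat.pow_le_pow_left h1 _
    _ = a * (a+1)^(2*k-1) := by rw [mul_pow]
    _ < (a+1) * (a+1)^(2*k-1) := by
        have : (0:ℕ) < (a+1)^(2*k-1) := by positivity
        exact (Nat.mul_lt_mul_right this).mpr (by omega)
    _ = (a+1)^(2*k) := by rw [← pow_succ']; congr 1; omega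
    _ ≤ (a+1)^m := Nat.pow_le_pow_right (by omega) hkm

theorem auxKer {K : Type*} [Field K] {A B : Type*} [Fintype A] [Fintype B]
    (h : Fintype.card B < Fintype.card A) (T : (A → K) →ₗ[K] (B → K)) :
    ∃ f : A → K, f ≠ 0 ∧ T f = 0 := by
  by_contra hc
  push_neg at hc
  have hinj : Function.Injective T := by
    rw [← LinearMap.ker_eq_bot, LinearMap.ker_eq_bot']
    intro f hf
    by_contra h0
    exact (hc f h0) hf
  have := LinearMap.finrank_le_finrank_of_injective hinj
  rw [Module.finrank_fintype_fun_eq_card, Module.finrank_fintype_fun_eq_card] at this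
  omega

theorem auxAnn {ι κ : Type*} [Fintype ι] [DecidableEq ι] [Fintype κ] [DecidableEq κ] [Nonempty κ]
    (hm : 2 * Fintype.card κ ≤ Fintype.card ι)
    (P : ι → MvPolynomial (κ × Fin 2) ℂ)
    (hP0 : ∀ e, (P e).IsWeightedHomogeneous (fun p => if p.2 = 0 then 1 else 0) 1)
    (hP1 : ∀ e, (P e).IsWeightedHomogeneous (fun p => if p.2 = 1 then 1 else 0) 1) :
    ∃ F : MvPolynomial ι ℂ, F ≠ 0 ∧ MvPolynomial.aeval P F = 0 := by
  classical
  set w0 : κ × Fin 2 → ℕ := fun p => if p.2 = 0 then 1 else 0 with hw0def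
  set w1 : κ × Fin 2 → ℕ := fun p => if p.2 = 1 then 1 else 0 with hw1def
  set k := Fintype.card κ with hkdef
  set m := Fintype.card ι with hmdef
  have hk1 : 1 ≤ k := Fintype.card_pos
  set D' := m ^ (2*k-1) with hD'def
  set D := m * D' with hDdef
  obtain ⟨u1⟩ := ‹Nonempty κ›
  set p0 : κ × Fin 2 := (u1, 1) with hp0def
  -- exponents and composed polynomials
  set expc : (ι → Fin (D'+1)) → (ι →₀ ℕ) :=
    fun c => Finsupp.equivFunOnFinite.symm (fun e => (c e : ℕ)) with hexpcdef
  set Q : (ι → Fin (D'+1)) → MvPolynomial (κ × Fin 2) ℂ :=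
    fun c => MvPolynomial.aeval P (MvPolynomial.monomial (expc c) (1:ℂ)) with hQdef
  have hexpc_apply : ∀ c e, expc c e = (c e : ℕ) := by
    intro c e; simp [hexpcdef]
  have hQeq : ∀ c, Q c = ∏ e : ι, P e ^ (c e : ℕ) := by
    intro c
    simp only [hQdef]
    rw [MvPolynomial.aeval_monomial]
    rw [Finsupp.prod_fintype _ _ (fun e => pow_zero (P e))]
    simp [hexpc_apply]
  have hpow : ∀ (w : κ × Fin 2 → ℕ), (∀ e, (P e).IsWeightedHomogeneous w 1) →
      ∀ (e : ι) (n : ℕ), ((P e) ^ n).IsWeightedHomogeneous w n := by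
    intro w h e n
    have := MvPolynomial.IsWeightedHomogeneous.prod (Finset.range n) (fun _ => P e)
      (fun _ => 1) (fun i _ => h e)
    simpa [Finset.prod_const, Finset.card_range] using this
  have hQhom : ∀ c, ∃ t : ℕ, t ≤ D ∧ (Q c).IsWeightedHomogeneous w0 t ∧
      (Q c).IsWeightedHomogeneous w1 t := by
    intro c
    refine ⟨∑ e : ι, (c e : ℕ), ?_, ?_, ?_⟩
    · calc ∑ e : ι, (c e : ℕ) ≤ ∑ _e : ι, D' := Finset.sum_le_sum (fun e _ => Fin.is_le _)
        _ = m * D' := by rw [Finset.sum_const, smul_eq_mul, Finset.card_univ]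
    · rw [hQeq]
      exact MvPolynomial.IsWeightedHomogeneous.prod Finset.univ _ _
        (fun e _ => hpow w0 hP0 e _)
    · rw [hQeq]
      exact MvPolynomial.IsWeightedHomogeneous.prod Finset.univ _ _
        (fun e _ => hpow w1 hP1 e _)
  -- weight computations
  have hwt0 : ∀ s : (κ × Fin 2) →₀ ℕ, Finsupp.weight w0 s = ∑ u : κ, s (u, 0) := by
    intro s
    rw [Finsupp.weight_apply, Finsupp.sum_fintype _ _ (fun p => by simp)]
    rw [Fintype.sum_prod_type]
    simp [hw0def, Fin.sum_univ_two]
  have hwt1 : ∀ s : (κ × Fin 2) →₀ ℕ, Finsupp.weight w1 s = ∑ u : κ, s (u, 1) := by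
    intro s
    rw [Finsupp.weight_apply, Finsupp.sum_fintype _ _ (fun p => by simp)]
    rw [Fintype.sum_prod_type]
    simp [hw1def, Fin.sum_univ_two]
  -- lifting coefficients
  set base : ({p : κ × Fin 2 // p ≠ p0} → Fin (D+1)) → (κ × Fin 2) → ℕ :=
    fun g p => if hp : p = p0 then 0 else (g ⟨p, hp⟩ : ℕ) with hbasedef
  set liftG : ({p : κ × Fin 2 // p ≠ p0} → Fin (D+1)) → ((κ × Fin 2) →₀ ℕ) :=
    fun g => Finsupp.equivFunOnFinite.symm
      (fun p => if p = p0 then (∑ u : κ, base g (u, 0)) - (∑ u : κ, base g (u, 1))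
        else base g p) with hliftGdef
  -- the linear map
  set T : ((ι → Fin (D'+1)) → ℂ) →ₗ[ℂ] (({p : κ × Fin 2 // p ≠ p0} → Fin (D+1)) → ℂ) :=
    { toFun := fun f g => ∑ c, f c * MvPolynomial.coeff (liftG g) (Q c)
      map_add' := by
        intro f f'; funext g; simp [add_mul, Finset.sum_add_distrib]
      map_smul' := by
        intro r f; funext g; simp [Finset.mul_sum, mul_assoc] } with hTdef
  have hcard : Fintype.card ({p : κ × Fin 2 // p ≠ p0} → Fin (D+1)) <
      Fintype.card (ι → Fin (D'+1)) := by
    rw [Fintype.card_fun, Fintype.card_fun, Fintype.card_fin, Fintype.card_fin]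
    have h1 : Fintype.card {p : κ × Fin 2 // p ≠ p0} = 2*k - 1 := by
      rw [Fintype.card_subtype_compl, Fintype.card_subtype_eq, Fintype.card_prod,
        Fintype.card_fin]
      omega
    rw [h1]
    exact auxNum k m hk1 hm
  obtain ⟨f, hf0, hTf⟩ := auxKer hcard T
  -- the polynomial F0
  set F0 : MvPolynomial ι ℂ := ∑ c, f c • MvPolynomial.monomial (expc c) (1:ℂ) with hF0def
  have hexp_inj : Function.Injective expc := by
    intro c c' h
    have h2 := Finsupp.equivFunOnFinite.symm.injective h
    funext e; exact Fin.ext (congrFun h2 e)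
  have hcoeffF0 : ∀ c, MvPolynomial.coeff (expc c) F0 = f c := by
    intro c
    rw [hF0def, MvPolynomial.coeff_sum]
    rw [Finset.sum_eq_single c]
    · simp [MvPolynomial.coeff_monomial]
    · intro c' _ hne
      have : expc c' ≠ expc c := fun h => hne (hexp_inj h)
      simp [MvPolynomial.coeff_smul, MvPolynomial.coeff_monomial, this]
    · intro h; exact absurd (Finset.mem_univ c) h
  have hF0ne : F0 ≠ 0 := by
    obtain ⟨c, hc⟩ := Function.ne_iff.mp hf0
    intro h
    apply hc
    have h2 := hcoeffF0 c
    rw [h, MvPolynomial.coeff_zero] at h2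
    simpa using h2.symm
  have hcoeffQ : ∀ s, MvPolynomial.coeff s (MvPolynomial.aeval P F0) =
      ∑ c, f c * MvPolynomial.coeff s (Q c) := by
    intro s
    rw [hF0def, map_sum, MvPolynomial.coeff_sum]
    refine Finset.sum_congr rfl fun c _ => ?_
    rw [map_smul, MvPolynomial.coeff_smul, smul_eq_mul, hQdef]
  refine ⟨F0, hF0ne, ?_⟩
  apply MvPolynomial.ext
  intro s
  rw [MvPolynomial.coeff_zero]
  by_contra hs
  rw [hcoeffQ] at hs
  obtain ⟨c, _, hc⟩ := Finset.exists_ne_zero_of_sum_ne_zero hs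
  have hQc : MvPolynomial.coeff s (Q c) ≠ 0 := right_ne_zero_of_mul hc
  obtain ⟨t, htD, h0, h1⟩ := hQhom c
  have hs0 : ∑ u : κ, s (u, 0) = t := by rw [← hwt0]; exact h0 hQc
  have hs1 : ∑ u : κ, s (u, 1) = t := by rw [← hwt1]; exact h1 hQc
  have hbound : ∀ p : κ × Fin 2, s p ≤ D := by
    rintro ⟨u, j⟩
    have h0' : s (u, 0) ≤ D :=
      le_trans (le_trans (Finset.single_le_sum (f := fun u => s (u, 0))
        (fun _ _ => Nat.zero_le _) (Finset.mem_univ u)) (le_of_eq hs0)) htD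
    have h1' : s (u, 1) ≤ D :=
      le_trans (le_trans (Finset.single_le_sum (f := fun u => s (u, 1))
        (fun _ _ => Nat.zero_le _) (Finset.mem_univ u)) (le_of_eq hs1)) htD
    fin_cases j
    · exact h0'
    · exact h1'
  set g : {p : κ × Fin 2 // p ≠ p0} → Fin (D+1) :=
    fun p => ⟨s p.1, Nat.lt_succ_of_le (hbound p.1)⟩ with hgdef
  have hbase : ∀ p (hp : p ≠ p0), base g p = s p := by
    intro p hp
    simp [hbasedef, hp, hgdef]
  have hbase0 : ∀ u : κ, base g (u, 0) = s (u, 0) := by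
    intro u
    have : (u, (0:Fin 2)) ≠ p0 := by simp [hp0def]
    exact hbase _ this
  have hbase1 : ∀ u : κ, u ≠ u1 → base g (u, 1) = s (u, 1) := by
    intro u hu
    have : (u, (1:Fin 2)) ≠ p0 := by simp [hp0def, hu]
    exact hbase _ this
  have hliftg : liftG g = s := by
    apply Finsupp.ext
    intro p
    have happ : liftG g p = if p = p0 then
        (∑ u : κ, base g (u, 0)) - (∑ u : κ, base g (u, 1)) else base g p := by
      simp [hliftGdef]
    rw [happ]
    by_cases hp : p = p0
    · rw [if_pos hp, hp]
      have e0 : ∑ u : κ, base g (u, 0) = t := by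
        rw [← hs0]; exact Finset.sum_congr rfl (fun u _ => hbase0 u)
      have e1 : ∑ u : κ, base g (u, 1) = t - s p0 := by
        have hsplit : ∑ u : κ, base g (u, 1)
            = base g (u1, 1) + ∑ u ∈ Finset.univ.erase u1, base g (u, 1) :=
          (Finset.add_sum_erase _ _ (Finset.mem_univ u1)).symm
        have hsplit' : ∑ u : κ, s (u, 1)
            = s (u1, 1) + ∑ u ∈ Finset.univ.erase u1, s (u, 1) :=
          (Finset.add_sum_erase _ _ (Finset.mem_univ u1)).symm
        have hb1 : base g (u1, 1) = 0 := by simp [hbasedef, hp0def]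
        have hcong : ∑ u ∈ Finset.univ.erase u1, base g (u, 1)
            = ∑ u ∈ Finset.univ.erase u1, s (u, 1) :=
          Finset.sum_congr rfl (fun u hu => hbase1 u (Finset.ne_of_mem_erase hu))
        have hle : s (u1, 1) ≤ t := by
          rw [← hs1]
          exact Finset.single_le_sum (f := fun u => s (u, 1)) (fun _ _ => Nat.zero_le _)
            (Finset.mem_univ u1)
        rw [hsplit, hb1, hcong, hp0def]
        omega
      rw [e0, e1]
      have hle : s p0 ≤ t := by
        rw [← hs1, hp0def]
        exact Finset.single_le_sum (f := fun u => s (u, 1)) (fun _ _ => Nat.zero_le _)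
          (Finset.mem_univ u1)
      omega
    · rw [if_neg hp]
      exact hbase p hp
  have : (∑ c, f c * MvPolynomial.coeff (liftG g) (Q c)) = 0 := congrFun hTf g
  rw [hliftg] at this
  exact hs this


/-- If a graph is not sparse, then for a general edge length
assignment `λ` the set of `λ`-compatible realizations is empty. -/
theorem not_sparse_general_fiber_empty
    {α : Type*} [DecidableEq α]
    (V : Finset α) (E : Finset (Sym2 α))
    (hGraph : IsGraph V E) (hns : ¬ IsSparse V E) :
    ∃ F : MvPolynomial {e // e ∈ E} ℂ, F ≠ 0 ∧
      ∀ lam : {e // e ∈ E} → ℂ, MvPolynomial.eval lam F ≠ 0 →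
        fiber V E lam = ∅ := by
  classical
  -- extract a dense subgraph
  have hex : ∃ V' E', IsSubgraph V' E' V E ∧ 2 ≤ V'.card ∧
      ¬((E'.card : ℤ) ≤ 2 * V'.card - 3) := by
    by_contra hno
    push_neg at hno
    exact hns ⟨hGraph, fun V' E' h1 h2 => hno V' E' h1 h2⟩
  obtain ⟨V', E', ⟨hG', hV'V, hE'E⟩, hV2, hElt⟩ := hex
  have hEcard : 2 * V'.card ≤ E'.card + 2 := by
    push_neg at hElt
    have : (2 * V'.card : ℤ) ≤ (E'.card : ℤ) + 2 := by linarith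
    exact_mod_cast this
  -- a base vertex
  have hV'ne : V'.Nonempty := Finset.card_pos.mp (by omega)
  obtain ⟨v0, hv0⟩ := hV'ne
  set U : Finset α := V'.erase v0 with hUdef
  have hUcard : U.card + 1 = V'.card := Finset.card_erase_add_one hv0
  have hUne : U.Nonempty := Finset.card_pos.mp (by omega)
  haveI hUne' : Nonempty {u // u ∈ U} := ⟨⟨hUne.choose, hUne.choose_spec⟩⟩
  -- the edge polynomials
  set Z : α → MvPolynomial ({u // u ∈ U} × Fin 2) ℂ :=
    fun u => if h : u ∈ U then MvPolynomial.X (⟨u, h⟩, 0) else 0 with hZdef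
  set Wp : α → MvPolynomial ({u // u ∈ U} × Fin 2) ℂ :=
    fun u => if h : u ∈ U then MvPolynomial.X (⟨u, h⟩, 1) else 0 with hWdef
  set Pf : {f : α → α → MvPolynomial ({u // u ∈ U} × Fin 2) ℂ //
      ∀ a b, f a b = f b a} :=
    ⟨fun u v => (Z u - Z v) * (Wp u - Wp v), fun u v => by ring⟩ with hPfdef
  set P : {e // e ∈ E'} → MvPolynomial ({u // u ∈ U} × Fin 2) ℂ :=
    fun e => Sym2.lift Pf e.1 with hPdef
  -- homogeneity
  set w0 : {u // u ∈ U} × Fin 2 → ℕ := fun p => if p.2 = 0 then 1 else 0 with hw0def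
  set w1 : {u // u ∈ U} × Fin 2 → ℕ := fun p => if p.2 = 1 then 1 else 0 with hw1def
  have hsub : ∀ (w : {u // u ∈ U} × Fin 2 → ℕ) (n : ℕ)
      (a b : MvPolynomial ({u // u ∈ U} × Fin 2) ℂ),
      a.IsWeightedHomogeneous w n → b.IsWeightedHomogeneous w n →
      (a - b).IsWeightedHomogeneous w n := fun w n a b ha hb =>
    (MvPolynomial.weightedHomogeneousSubmodule ℂ w n).sub_mem ha hb
  have hZ0 : ∀ u, (Z u).IsWeightedHomogeneous w0 1 := by
    intro u
    by_cases h : u ∈ U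
    · rw [hZdef]; simp only [dif_pos h]
      have := MvPolynomial.isWeightedHomogeneous_X ℂ w0 ((⟨u, h⟩, 0) :
        {u // u ∈ U} × Fin 2)
      simpa [hw0def] using this
    · rw [hZdef]; simp only [dif_neg h]
      exact MvPolynomial.isWeightedHomogeneous_zero ℂ w0 1
  have hZ1 : ∀ u, (Z u).IsWeightedHomogeneous w1 0 := by
    intro u
    by_cases h : u ∈ U
    · rw [hZdef]; simp only [dif_pos h]
      have := MvPolynomial.isWeightedHomogeneous_X ℂ w1 ((⟨u, h⟩, 0) :
        {u // u ∈ U} × Fin 2)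
      simpa [hw1def] using this
    · rw [hZdef]; simp only [dif_neg h]
      exact MvPolynomial.isWeightedHomogeneous_zero ℂ w1 0
  have hW0 : ∀ u, (Wp u).IsWeightedHomogeneous w0 0 := by
    intro u
    by_cases h : u ∈ U
    · rw [hWdef]; simp only [dif_pos h]
      have := MvPolynomial.isWeightedHomogeneous_X ℂ w0 ((⟨u, h⟩, 1) :
        {u // u ∈ U} × Fin 2)
      simpa [hw0def] using this
    · rw [hWdef]; simp only [dif_neg h]
      exact MvPolynomial.isWeightedHomogeneous_zero ℂ w0 0
  have hW1 : ∀ u, (Wp u).IsWeightedHomogeneous w1 1 := by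
    intro u
    by_cases h : u ∈ U
    · rw [hWdef]; simp only [dif_pos h]
      have := MvPolynomial.isWeightedHomogeneous_X ℂ w1 ((⟨u, h⟩, 1) :
        {u // u ∈ U} × Fin 2)
      simpa [hw1def] using this
    · rw [hWdef]; simp only [dif_neg h]
      exact MvPolynomial.isWeightedHomogeneous_zero ℂ w1 1
  have hPmk : ∀ u v, Sym2.lift Pf s(u, v) = (Z u - Z v) * (Wp u - Wp v) := by
    intro u v
    rw [hPfdef, Sym2.lift_mk]
  have hP0 : ∀ e : {e // e ∈ E'}, (P e).IsWeightedHomogeneous w0 1 := by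
    rintro ⟨e, he⟩
    induction e using Sym2.ind with
    | _ u v =>
      rw [hPdef]
      simp only
      rw [hPmk]
      have := MvPolynomial.IsWeightedHomogeneous.mul
        (hsub w0 1 (Z u) (Z v) (hZ0 u) (hZ0 v))
        (hsub w0 0 (Wp u) (Wp v) (hW0 u) (hW0 v))
      simpa using this
  have hP1 : ∀ e : {e // e ∈ E'}, (P e).IsWeightedHomogeneous w1 1 := by
    rintro ⟨e, he⟩
    induction e using Sym2.ind with
    | _ u v =>
      rw [hPdef]
      simp only
      rw [hPmk]
      have := MvPolynomial.IsWeightedHomogeneous.mul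
        (hsub w1 0 (Z u) (Z v) (hZ1 u) (hZ1 v))
        (hsub w1 1 (Wp u) (Wp v) (hW1 u) (hW1 v))
      simpa using this
  -- apply the annihilator lemma
  have hmcard : 2 * Fintype.card {u // u ∈ U} ≤ Fintype.card {e // e ∈ E'} := by
    rw [Fintype.card_coe, Fintype.card_coe]
    omega
  obtain ⟨F0, hF0ne, hF0ann⟩ := auxAnn hmcard P hP0 hP1
  -- rename to E
  set inc : {e // e ∈ E'} → {e // e ∈ E} := fun e => ⟨e.1, hE'E e.2⟩ with hincdef
  have hinc_inj : Function.Injective inc := by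
    intro a b hab
    apply Subtype.ext
    have := congrArg Subtype.val hab
    simpa [hincdef] using this
  refine ⟨MvPolynomial.rename inc F0, ?_, ?_⟩
  · intro h
    apply hF0ne
    apply MvPolynomial.rename_injective inc hinc_inj
    rw [h, map_zero]
  · intro lam hlam
    rw [Set.eq_empty_iff_forall_notMem]
    intro r hr
    apply hlam
    rw [MvPolynomial.eval_rename]
    -- realization values
    set R : α → ℂ × ℂ := extendR V r with hRdef
    set zc : α → ℂ := fun u => ((R u).1 - (R v0).1) + Complex.I * ((R u).2 - (R v0).2)
      with hzcdef
    set wc : α → ℂ := fun u => ((R u).1 - (R v0).1) - Complex.I * ((R u).2 - (R v0).2)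
      with hwcdef
    set ρ : {u // u ∈ U} × Fin 2 → ℂ :=
      fun p => if p.2 = 0 then zc p.1.1 else wc p.1.1 with hρdef
    have hzeval : ∀ u, u ∈ V' → MvPolynomial.aeval ρ (Z u) = zc u := by
      intro u hu
      by_cases h : u ∈ U
      · rw [hZdef]; simp only [dif_pos h]
        rw [MvPolynomial.aeval_X]
        simp [hρdef]
      · have huv0 : u = v0 := by
          by_contra hne
          exact h (Finset.mem_erase.mpr ⟨hne, hu⟩)
        rw [hZdef]; simp only [dif_neg h]
        rw [map_zero, huv0, hzcdef]
        simp
    have hweval : ∀ u, u ∈ V' → MvPolynomial.aeval ρ (Wp u) = wc u := by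
      intro u hu
      by_cases h : u ∈ U
      · rw [hWdef]; simp only [dif_pos h]
        rw [MvPolynomial.aeval_X]
        simp [hρdef]
      · have huv0 : u = v0 := by
          by_contra hne
          exact h (Finset.mem_erase.mpr ⟨hne, hu⟩)
        rw [hWdef]; simp only [dif_neg h]
        rw [map_zero, huv0, hwcdef]
        simp
    have hPeval : ∀ e : {e // e ∈ E'}, MvPolynomial.aeval ρ (P e) = lam (inc e) := by
      rintro ⟨e, he⟩
      have hlam2 : lam (inc ⟨e, he⟩) = edgeVal R e := by
        rw [← hr]
        rfl
      rw [hlam2, hPdef]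
      simp only
      induction e using Sym2.ind with
      | _ u v =>
        have hu : u ∈ V' := (hG' s(u, v) he).2 u (Sym2.mem_mk_left u v)
        have hv : v ∈ V' := (hG' s(u, v) he).2 v (Sym2.mem_mk_right u v)
        rw [hPmk]
        rw [map_mul, map_sub, map_sub, hzeval u hu, hzeval v hv,
          hweval u hu, hweval v hv]
        have hev : edgeVal R s(u, v) = sd (R u) (R v) := by
          rw [edgeVal, Sym2.lift_mk]
        rw [hev, sd, hzcdef, hwcdef]
        have hI := Complex.I_sq
        ring_nf
        linear_combination (-(((R u).2 - (R v).2) ^ 2)) * hI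
    have key : MvPolynomial.aeval ρ (MvPolynomial.aeval P F0) =
        MvPolynomial.aeval (fun e => MvPolynomial.aeval ρ (P e)) F0 :=
      MvPolynomial.comp_aeval_apply (f := P) (MvPolynomial.aeval ρ) F0
    rw [hF0ann, map_zero] at key
    have h2 : MvPolynomial.aeval (fun e => MvPolynomial.aeval ρ (P e)) F0 = 0 := key.symm
    have h3 : (fun e => MvPolynomial.aeval ρ (P e)) = lam ∘ inc := funext hPeval
    rw [h3] at h2
    have hfin : MvPolynomial.eval (lam ∘ inc) F0 = MvPolynomial.aeval (lam ∘ inc) F0 :=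
      (RingHom.congr_fun (MvPolynomial.coe_aeval_eq_eval (lam ∘ inc)) F0).symm
    rw [hfin]
    exact h2
end

section
/- Let B and A be commutative integral domains and let B → A be an injective ring homomorphism making A a B-algebra. If the tensor product A ⊗_B A is an integral domain, then Frac(A) ⊗_{Frac(B)} Frac(A) is an integral domain, where Frac denotes the field of fractions and Frac(A) is regarded as a Frac(B)-algebra via the embedding Frac(B) → Frac(A) induced by B → A. -/
open scoped TensorProduct

set_option maxHeartbeats 1600000 in
/-- Let `B → A` be an injective ring homomorphism between
integral domains (making `A` a `B`-algebra). Let `K = Frac(B)` and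
`L = Frac(A)`, with `L` a `K`-algebra via the embedding induced by `B → A`
(expressed by the scalar tower conditions). If `A ⊗[B] A` is an integral
domain, then `L ⊗[K] L` is an integral domain. -/
theorem isDomain_fractionField_tensor_of_isDomain_tensor
    {B A K L : Type*} [CommRing B] [CommRing A] [IsDomain B] [IsDomain A]
    [Algebra B A] (hinj : Function.Injective (algebraMap B A))
    [Field K] [Algebra B K] [IsFractionRing B K]
    [Field L] [Algebra A L] [IsFractionRing A L]
    [Algebra B L] [IsScalarTower B A L]
    [Algebra K L] [IsScalarTower B K L]
    (hdom : IsDomain (A ⊗[B] A)) :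
    IsDomain (L ⊗[K] L) := by
  classical
  haveI := hdom
  -- Step 1 : `L ⊗[B] L` is a domain, being (isomorphic to) a localization of `A ⊗[B] A`.
  let f : A →ₐ[B] L := IsScalarTower.toAlgHom B A L
  have hf : Function.Injective f := IsFractionRing.injective A L
  let φ : A ⊗[B] A →ₐ[B] L ⊗[B] L := Algebra.TensorProduct.map f f
  set gen : Set (A ⊗[B] A) :=
    {x | ∃ a : A, a ≠ 0 ∧ (x = a ⊗ₜ[B] (1 : A) ∨ x = (1 : A) ⊗ₜ[B] a)} with hgen
  set S' : Submonoid (A ⊗[B] A) := Submonoid.closure gen with hS'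
  have hle : S' ≤ nonZeroDivisors (A ⊗[B] A) := by
    rw [hS', Submonoid.closure_le]
    rintro x ⟨a, ha, (rfl | rfl)⟩ <;>
    · refine mem_nonZeroDivisors_of_ne_zero fun h0 => ha ?_
      have := congrArg (Algebra.TensorProduct.lmul' (S := A) B) h0
      simpa using this
  haveI : IsDomain (Localization S') := IsLocalization.isDomain_localization hle
  -- units
  have hunit : ∀ s : S', IsUnit (φ.toRingHom s) := by
    rintro ⟨s, hs⟩
    refine Submonoid.closure_induction ?_ ?_ ?_ hs
    · rintro x ⟨a, ha, (rfl | rfl)⟩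
      · have : φ.toRingHom (a ⊗ₜ[B] (1 : A)) = (f a) ⊗ₜ[B] (1 : L) := by
          simp [φ]
        rw [this]
        have hfa : IsUnit (f a) := isUnit_iff_ne_zero.2 fun h => ha (hf (by simpa using h))
        exact hfa.map (Algebra.TensorProduct.includeLeft (S := B))
      · have : φ.toRingHom ((1 : A) ⊗ₜ[B] a) = (1 : L) ⊗ₜ[B] (f a) := by
          simp [φ]
        rw [this]
        have hfa : IsUnit (f a) := isUnit_iff_ne_zero.2 fun h => ha (hf (by simpa using h))
        exact hfa.map (Algebra.TensorProduct.includeRight (R := B))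
    · simpa using isUnit_one
    · intro x y hx hy hux huy
      rw [map_mul]
      exact hux.mul huy
  let α : Localization S' →+* L ⊗[B] L := IsLocalization.lift hunit
  -- the inverse map
  haveI : IsScalarTower B (A ⊗[B] A) (Localization S') :=
    inferInstance
  have hmemL : ∀ s : nonZeroDivisors A, ((s : A) ⊗ₜ[B] (1 : A)) ∈ S' :=
    fun s => Submonoid.subset_closure ⟨s, nonZeroDivisors.ne_zero s.2, Or.inl rfl⟩
  have hmemR : ∀ s : nonZeroDivisors A, ((1 : A) ⊗ₜ[B] (s : A)) ∈ S' :=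
    fun s => Submonoid.subset_closure ⟨s, nonZeroDivisors.ne_zero s.2, Or.inr rfl⟩
  let iL : A →ₐ[B] Localization S' :=
    (IsScalarTower.toAlgHom B (A ⊗[B] A) (Localization S')).comp
      (Algebra.TensorProduct.includeLeft (S := B))
  let iR : A →ₐ[B] Localization S' :=
    (IsScalarTower.toAlgHom B (A ⊗[B] A) (Localization S')).comp
      (Algebra.TensorProduct.includeRight (R := B))
  have huL : ∀ s : nonZeroDivisors A, IsUnit (iL s) :=
    fun s => IsLocalization.map_units (Localization S') ⟨_, hmemL s⟩
  have huR : ∀ s : nonZeroDivisors A, IsUnit (iR s) :=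
    fun s => IsLocalization.map_units (Localization S') ⟨_, hmemR s⟩
  let βl : L →ₐ[B] Localization S' := IsLocalization.liftAlgHom (M := nonZeroDivisors A) huL
  let βr : L →ₐ[B] Localization S' := IsLocalization.liftAlgHom (M := nonZeroDivisors A) huR
  let ψ : L ⊗[B] L →ₐ[B] Localization S' := Algebra.TensorProduct.productMap βl βr
  -- `α` is a left inverse of `ψ`
  have hL : ∀ x : L, α (βl x) = x ⊗ₜ[B] (1 : L) := by
    have : α.comp (βl : L →+* Localization S') =
        (Algebra.TensorProduct.includeLeft (S := B) : L →ₐ[B] L ⊗[B] L).toRingHom := by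
      apply IsLocalization.ringHom_ext (nonZeroDivisors A)
      ext a
      simp only [RingHom.coe_comp, Function.comp_apply, AlgHom.toRingHom_eq_coe,
        RingHom.coe_coe]
      rw [show (βl ((algebraMap A L) a) : Localization S') = iL a from
        IsLocalization.lift_eq huL a]
      rw [show α (iL a) = φ.toRingHom (a ⊗ₜ[B] (1 : A)) from IsLocalization.lift_eq hunit _]
      simp [φ, f]
    intro x
    exact DFunLike.congr_fun this x
  have hR : ∀ x : L, α (βr x) = (1 : L) ⊗ₜ[B] x := by
    have : α.comp (βr : L →+* Localization S') =
        (Algebra.TensorProduct.includeRight (R := B) : L →ₐ[B] L ⊗[B] L).toRingHom := by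
      apply IsLocalization.ringHom_ext (nonZeroDivisors A)
      ext a
      simp only [RingHom.coe_comp, Function.comp_apply, AlgHom.toRingHom_eq_coe,
        RingHom.coe_coe]
      rw [show (βr ((algebraMap A L) a) : Localization S') = iR a from
        IsLocalization.lift_eq huR a]
      rw [show α (iR a) = φ.toRingHom ((1 : A) ⊗ₜ[B] a) from IsLocalization.lift_eq hunit _]
      simp [φ, f]
    intro x
    exact DFunLike.congr_fun this x
  have hαψ : ∀ x : L ⊗[B] L, α (ψ x) = x := by
    intro x
    induction x using TensorProduct.induction_on with
    | zero => simp
    | tmul x y =>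
      have : ψ (x ⊗ₜ[B] y) = βl x * βr y := Algebra.TensorProduct.productMap_apply_tmul _ _ _ _
      rw [this, map_mul, hL, hR, Algebra.TensorProduct.tmul_mul_tmul, mul_one, one_mul]
    | add u v hu hv => rw [map_add, map_add, hu, hv]
  have hψinj : Function.Injective ψ := fun x y h => by rw [← hαψ x, ← hαψ y, h]
  haveI hdomBL : IsDomain (L ⊗[B] L) :=
    Function.Injective.isDomain ψ.toRingHom hψinj
  -- Step 2 : `L ⊗[K] L ≃ L ⊗[B] L` multiplicatively.
  haveI : SMulCommClass B K L :=
    ⟨fun b k l => by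
      rw [Algebra.smul_def, Algebra.smul_def, Algebra.smul_def, Algebra.smul_def, mul_left_comm]⟩
  haveI : TensorProduct.CompatibleSMul B K L L :=
    IsLocalization.tensorProduct_compatibleSMul (nonZeroDivisors B) K L L
  haveI : TensorProduct.CompatibleSMul K B L L :=
    ⟨fun b m n => by
      rw [algebra_compatible_smul K b m, algebra_compatible_smul K b n,
        TensorProduct.smul_tmul]⟩
  let e : L ⊗[K] L ≃ₗ[K] L ⊗[B] L := TensorProduct.equivOfCompatibleSMul B K K L L
  have etmul : ∀ x y : L, e (x ⊗ₜ[K] y) = x ⊗ₜ[B] y := fun x y => rfl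
  have he : ∀ x y : L ⊗[K] L, e (x * y) = e x * e y := by
    intro x y
    induction x using TensorProduct.induction_on with
    | zero => simp
    | add u v hu hv => rw [add_mul, map_add, map_add, add_mul, hu, hv]
    | tmul a b =>
      induction y using TensorProduct.induction_on with
      | zero => simp
      | add u v hu hv => rw [mul_add, map_add, map_add, mul_add, hu, hv]
      | tmul c d =>
        rw [Algebra.TensorProduct.tmul_mul_tmul, etmul, etmul, etmul,
          Algebra.TensorProduct.tmul_mul_tmul]
  let g : L ⊗[K] L →+* L ⊗[B] L :=
    { toFun := e
      map_one' := by rw [Algebra.TensorProduct.one_def, etmul, Algebra.TensorProduct.one_def]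
      map_mul' := he
      map_zero' := map_zero e
      map_add' := map_add e }
  exact Function.Injective.isDomain g fun x y h => e.injective h
end

section
/- Let E/F be a field extension such that the tensor product E ⊗_F E is an integral domain. If e ∈ E is algebraic over F, then e ∈ F. -/
open scoped TensorProduct

set_option maxHeartbeats 2000000 in
/-- If `E/F` is a field extension such that `E ⊗[F] E` is an
integral domain, then every element of `E` that is algebraic over `F` lies in
`F`. -/
theorem algebraic_mem_bot_of_isDomain_tensor
    {F E : Type*} [Field F] [Field E] [Algebra F E]
    (hdom : IsDomain (E ⊗[F] E))
    (e : E) (halg : IsAlgebraic F e) :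
    e ∈ (algebraMap F E).range := by
  set K := IntermediateField.adjoin F {e} with hK
  haveI : FiniteDimensional F K := IntermediateField.adjoin.finiteDimensional halg.isIntegral
  -- the map K ⊗ K → E ⊗ E is injective
  let f : K ⊗[F] K →ₐ[F] E ⊗[F] E := Algebra.TensorProduct.map K.val K.val
  have hinj : Function.Injective f := by
    have h1 : Function.Injective (K.val.toLinearMap.rTensor (K : Type _)) :=
      Module.Flat.rTensor_preserves_injective_linearMap _ K.val.injective
    have h2 : Function.Injective (K.val.toLinearMap.lTensor E) :=
      Module.Flat.lTensor_preserves_injective_linearMap _ K.val.injective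
    have : Function.Injective
        (TensorProduct.map K.val.toLinearMap K.val.toLinearMap) := by
      rw [← LinearMap.lTensor_comp_rTensor]
      exact h2.comp h1
    exact this
  haveI : IsDomain (K ⊗[F] K) := Function.Injective.isDomain f.toRingHom hinj
  -- hence K ⊗ K is a field
  have hfield : IsField (K ⊗[F] K) :=
    isField_of_isIntegral_of_isField' (S := K ⊗[F] K) (Field.toIsField F)
  -- the multiplication map K ⊗ K → K is injective
  letI : Field (K ⊗[F] K) := hfield.toField
  have hmulinj : Function.Injective (Algebra.TensorProduct.lmul' F (S := K)) :=
    (Algebra.TensorProduct.lmul' F (S := K)).toRingHom.injective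
  have hle : Module.finrank F (K ⊗[F] K) ≤ Module.finrank F K :=
    LinearMap.finrank_le_finrank_of_injective
      (f := (Algebra.TensorProduct.lmul' F (S := K)).toLinearMap) hmulinj
  rw [Module.finrank_tensorProduct] at hle
  have hpos : 0 < Module.finrank F K := Module.finrank_pos
  have hone : Module.finrank F K = 1 := by nlinarith
  have : K = ⊥ := IntermediateField.finrank_eq_one_iff.mp hone
  have he : e ∈ K := IntermediateField.mem_adjoin_simple_self F e
  rw [this, IntermediateField.mem_bot] at he
  exact he
end

section
/- Let B and A be commutative integral domains and let B → A be an injective ring homomorphism making A a B-algebra. If the tensor product A ⊗_B A is an integral domain, then Frac(B) is algebraically closed in Frac(A): every element of Frac(A) that is algebraic over (the image of) Frac(B) lies in (the image of) Frac(B). -/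
set_option maxHeartbeats 1600000
set_option synthInstance.maxHeartbeats 400000

open scoped TensorProduct
open Module IntermediateField

theorem aux_isDomain_frac_tensor
    {B A K L : Type*} [CommRing B] [CommRing A] [IsDomain B] [IsDomain A]
    [Algebra B A]
    [Field K] [Algebra B K] [IsFractionRing B K]
    [Field L] [Algebra A L] [IsFractionRing A L]
    [Algebra B L] [IsScalarTower B A L]
    [Algebra K L] [IsScalarTower B K L]
    (hdom : IsDomain (A ⊗[B] A)) :
    IsDomain (L ⊗[K] L) := by
  classical
  letI := hdom
  let F := FractionRing (A ⊗[B] A)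
  let ι : A ⊗[B] A →+* F := algebraMap _ _
  have hι : Function.Injective ι := IsFractionRing.injective _ _
  -- the two inclusions A → A ⊗[B] A are injective
  have hleft : Function.Injective (Algebra.TensorProduct.includeLeftRingHom :
      A →+* A ⊗[B] A) := by
    intro a b h
    have h2 := congrArg (Algebra.TensorProduct.lmul' (S := A) B) h
    simpa using h2
  have hright : Function.Injective
      ((Algebra.TensorProduct.includeRight : A →ₐ[B] A ⊗[B] A) : A →+* A ⊗[B] A) := by
    intro a b h
    have h2 := congrArg (Algebra.TensorProduct.lmul' (S := A) B) h
    simpa using h2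
  -- lift to maps L → F
  have hli : Function.Injective
      (ι.comp (Algebra.TensorProduct.includeLeftRingHom : A →+* A ⊗[B] A)) := hι.comp hleft
  have hri : Function.Injective
      (ι.comp ((Algebra.TensorProduct.includeRight : A →ₐ[B] A ⊗[B] A) :
        A →+* A ⊗[B] A)) := hι.comp hright
  let g₁ : L →+* F := IsFractionRing.lift hli
  let g₂ : L →+* F := IsFractionRing.lift hri
  have hg₁ : ∀ a : A, g₁ (algebraMap A L a) = ι (a ⊗ₜ 1) := fun a =>
    IsFractionRing.lift_algebraMap _ _
  have hg₂ : ∀ a : A, g₂ (algebraMap A L a) = ι (1 ⊗ₜ a) := fun a =>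
    IsFractionRing.lift_algebraMap _ _
  -- they agree on K
  have hkey : g₁.comp (algebraMap K L) = g₂.comp (algebraMap K L) := by
    apply IsLocalization.ringHom_ext (nonZeroDivisors B)
    ext b
    have h1 : (algebraMap K L) (algebraMap B K b) = algebraMap A L (algebraMap B A b) := by
      rw [← IsScalarTower.algebraMap_apply, IsScalarTower.algebraMap_apply B A L]
    have h2 : (algebraMap B A b : A) ⊗ₜ[B] (1 : A) = (1 : A) ⊗ₜ[B] (algebraMap B A b) := by
      rw [← Algebra.TensorProduct.algebraMap_apply, Algebra.TensorProduct.algebraMap_apply']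
    simp only [RingHom.coe_comp, Function.comp_apply, h1, hg₁, hg₂, h2]
  letI : Algebra K F := (g₁.comp (algebraMap K L)).toAlgebra
  let e₁ : L →ₐ[K] F := AlgHom.mk g₁ fun k => rfl
  let e₂ : L →ₐ[K] F := AlgHom.mk g₂ fun k => (RingHom.congr_fun hkey k).symm
  let φ : L ⊗[K] L →ₐ[K] F := Algebra.TensorProduct.productMap e₁ e₂
  -- the canonical map A ⊗[B] A → L ⊗[K] L
  letI : IsScalarTower B K (L ⊗[K] L) := IsScalarTower.of_algebraMap_eq' (by
    ext b
    show (algebraMap B L b) ⊗ₜ[K] (1 : L) = (algebraMap K L (algebraMap B K b)) ⊗ₜ[K] (1 : L)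
    rw [← IsScalarTower.algebraMap_apply])
  let f₁ : A →ₐ[B] L ⊗[K] L :=
    ((Algebra.TensorProduct.includeLeft : L →ₐ[K] L ⊗[K] L).restrictScalars B).comp
      (IsScalarTower.toAlgHom B A L)
  let f₂ : A →ₐ[B] L ⊗[K] L :=
    ((Algebra.TensorProduct.includeRight : L →ₐ[K] L ⊗[K] L).restrictScalars B).comp
      (IsScalarTower.toAlgHom B A L)
  let j : A ⊗[B] A →ₐ[B] L ⊗[K] L := Algebra.TensorProduct.productMap f₁ f₂
  have hj : ∀ a c : A, j (a ⊗ₜ c) = algebraMap A L a ⊗ₜ[K] algebraMap A L c := by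
    intro a c
    simp only [j, f₁, f₂, Algebra.TensorProduct.productMap_apply_tmul, AlgHom.comp_apply,
      AlgHom.coe_restrictScalars', IsScalarTower.coe_toAlgHom',
      Algebra.TensorProduct.includeLeft_apply, Algebra.TensorProduct.includeRight_apply]
    rw [Algebra.TensorProduct.tmul_mul_tmul, mul_one, one_mul]
  have hφj : ∀ w : A ⊗[B] A, φ (j w) = ι w := by
    intro w
    induction w using TensorProduct.induction_on with
    | zero => simp
    | tmul a c =>
      rw [hj]
      have : φ (algebraMap A L a ⊗ₜ[K] algebraMap A L c)
          = g₁ (algebraMap A L a) * g₂ (algebraMap A L c) :=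
        Algebra.TensorProduct.productMap_apply_tmul e₁ e₂ _ _
      rw [this, hg₁, hg₂, ← map_mul, Algebra.TensorProduct.tmul_mul_tmul, mul_one, one_mul]
    | add x y hx hy => rw [map_add, map_add, map_add, hx, hy]
  -- common denominators
  have hdenom : ∀ x : L ⊗[K] L, ∃ s t : A, s ∈ nonZeroDivisors A ∧ t ∈ nonZeroDivisors A ∧
      ∃ w : A ⊗[B] A, (algebraMap A L s ⊗ₜ[K] algebraMap A L t) * x = j w := by
    intro x
    induction x using TensorProduct.induction_on with
    | zero => exact ⟨1, 1, one_mem _, one_mem _, 0, by simp⟩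
    | tmul l l' =>
      obtain ⟨⟨a, s⟩, hs⟩ := IsLocalization.surj (nonZeroDivisors A) (S := L) l
      obtain ⟨⟨c, t⟩, ht⟩ := IsLocalization.surj (nonZeroDivisors A) (S := L) l'
      refine ⟨s, t, s.2, t.2, a ⊗ₜ c, ?_⟩
      rw [hj, Algebra.TensorProduct.tmul_mul_tmul, ← hs, ← ht, mul_comm l _, mul_comm l' _]
    | add x y hx hy =>
      obtain ⟨s, t, hs, ht, w, hw⟩ := hx
      obtain ⟨s', t', hs', ht', w', hw'⟩ := hy
      refine ⟨s * s', t * t', mul_mem hs hs', mul_mem ht ht',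
        (s' ⊗ₜ t') * w + (s ⊗ₜ t) * w', ?_⟩
      simp only [map_add, map_mul, hj]
      rw [← hw, ← hw', ← Algebra.TensorProduct.tmul_mul_tmul]
      ring
  -- φ is injective
  have hφinj : Function.Injective φ := by
    have : ∀ x : L ⊗[K] L, φ x = 0 → x = 0 := by
      intro x hx
      obtain ⟨s, t, hs, ht, w, hw⟩ := hdenom x
      have h0 : ι w = 0 := by rw [← hφj, ← hw, map_mul, hx, mul_zero]
      have hw0 : w = 0 := hι (by simpa using h0)
      rw [hw0, map_zero] at hw
      have hsL : algebraMap A L s ≠ 0 := fun h =>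
        nonZeroDivisors.ne_zero hs ((IsFractionRing.to_map_eq_zero_iff (K := L)).mp h)
      have htL : algebraMap A L t ≠ 0 := fun h =>
        nonZeroDivisors.ne_zero ht ((IsFractionRing.to_map_eq_zero_iff (K := L)).mp h)
      have hunit : IsUnit (algebraMap A L s ⊗ₜ[K] algebraMap A L t) := by
        refine IsUnit.of_mul_eq_one ((algebraMap A L s)⁻¹ ⊗ₜ[K] (algebraMap A L t)⁻¹) ?_
        rw [Algebra.TensorProduct.tmul_mul_tmul, mul_inv_cancel₀ hsL, mul_inv_cancel₀ htL]
        rfl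
      exact (IsUnit.mul_right_eq_zero hunit).mp hw
    exact (injective_iff_map_eq_zero φ).mpr fun a ha => this a ha
  exact Function.Injective.isDomain φ.toRingHom hφinj

theorem aux_alg_closed_of_isDomain_self_tensor
    {K L : Type*} [Field K] [Field L] [Algebra K L]
    (hdom : IsDomain (L ⊗[K] L)) :
    ∀ x : L, IsAlgebraic K x → x ∈ (algebraMap K L).range := by
  classical
  intro x hx
  have hi : IsIntegral K x := hx.isIntegral
  haveI : FiniteDimensional K K⟮x⟯ := IntermediateField.adjoin.finiteDimensional hi
  set M := K⟮x⟯ with hM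
  let ψ : M ⊗[K] M →ₐ[K] L ⊗[K] L := Algebra.TensorProduct.map M.val M.val
  have hval : Function.Injective M.val.toLinearMap := Subtype.val_injective
  have hψ : Function.Injective ψ := by
    have h := (Module.Flat.rTensor_preserves_injective_linearMap
        (M := L) M.val.toLinearMap hval).comp
      (Module.Flat.lTensor_preserves_injective_linearMap (M := (M : IntermediateField K L))
        M.val.toLinearMap hval)
    rwa [← LinearMap.coe_comp, LinearMap.rTensor_comp_lTensor] at h
  haveI : IsDomain (M ⊗[K] M) := Function.Injective.isDomain ψ.toRingHom hψ
  haveI : Algebra.IsIntegral K (M ⊗[K] M) := Algebra.IsIntegral.of_finite _ _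
  have hfield : IsField (M ⊗[K] M) := by
    have := isField_of_isIntegral_of_isField' (S := M ⊗[K] M) (Field.toIsField K); exact this
  letI : Module ↥M ↥M := Semiring.toModule
  let μ : M ⊗[K] M →ₐ[K] M := Algebra.TensorProduct.lmul' (S := M) K
  have hμs : Function.Surjective μ := fun m =>
    ⟨m ⊗ₜ 1, by simp [μ, Algebra.TensorProduct.lmul'_apply_tmul]⟩
  have hμi : Function.Injective μ := by
    letI := IsField.toField (R := M ⊗[K] M) hfield
    exact RingHom.injective μ.toRingHom
  have hfr : finrank K M * finrank K M = finrank K M := by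
    have := (LinearEquiv.ofBijective μ.toLinearMap ⟨hμi, hμs⟩).finrank_eq
    rwa [Module.finrank_tensorProduct] at this
  have hpos : 0 < finrank K M := Module.finrank_pos
  have h1 : finrank K M = 1 := Nat.eq_of_mul_eq_mul_left hpos (by rw [hfr, mul_one])
  have hx' : x ∈ (⊥ : IntermediateField K L) :=
    IntermediateField.finrank_adjoin_simple_eq_one_iff.mp h1
  rcases IntermediateField.mem_bot.mp hx' with ⟨y, hy⟩
  exact ⟨y, hy⟩

/-- Let `B → A` be an injective ring homomorphism between
integral domains, let `K = Frac(B)` and `L = Frac(A)` with `L` a `K`-algebra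
via the embedding induced by `B → A` (expressed by the scalar tower
conditions). If `A ⊗[B] A` is an integral domain, then `K` is algebraically
closed in `L`: every element of `L` algebraic over `K` lies in the image
of `K`. -/
theorem fractionField_algebraically_closed_of_isDomain_tensor
    {B A K L : Type*} [CommRing B] [CommRing A] [IsDomain B] [IsDomain A]
    [Algebra B A] (hinj : Function.Injective (algebraMap B A))
    [Field K] [Algebra B K] [IsFractionRing B K]
    [Field L] [Algebra A L] [IsFractionRing A L]
    [Algebra B L] [IsScalarTower B A L]
    [Algebra K L] [IsScalarTower B K L]
    (hdom : IsDomain (A ⊗[B] A)) :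
    ∀ x : L, IsAlgebraic K x → x ∈ (algebraMap K L).range :=
  aux_alg_closed_of_isDomain_self_tensor (aux_isDomain_frac_tensor hdom)
end

section
/- Let p₁,p₂,p₃,q₁,q₂,q₃ ∈ ℂ² be such that p₁,p₂,p₃ are not collinear (the vectors p₂−p₁ and p₃−p₁ are linearly independent over ℂ), d(p₁,p₂) = d(q₁,q₂) ≠ 0, d(p₂,p₃) = d(q₂,q₃), and d(p₁,p₃) ≠ d(q₁,q₃). Define Γ := {(p₀,q₀) ∈ ℂ² × ℂ² : d(p₀,p_w) = d(q₀,q_w) for w = 1,2,3} and Γ' := {(p₀,q₀) ∈ Γ : there exists t ∈ T with t(p₀) = q₀, t(p₁) = q₁ and t(p₂) = q₂}. Then Γ' is irreducible and dim Γ = dim Γ' = 1, where subsets of ℂ² × ℂ² are regarded as subsets of ℂ⁴. -/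
noncomputable section

/-- A point of `ℂ² × ℂ²` viewed as a point of `ℂ⁴`. -/
def pt4 (p : (ℂ × ℂ) × (ℂ × ℂ)) : Fin 4 → ℂ := ![p.1.1, p.1.2, p.2.1, p.2.2]

/-- The vanishing ideal of a subset of `ℂ² × ℂ² = ℂ⁴` in `ℂ[x₁, x₂, x₃, x₄]`. -/
def vanIdeal4 (S : Set ((ℂ × ℂ) × (ℂ × ℂ))) : Ideal (MvPolynomial (Fin 4) ℂ) where
  carrier := {f | ∀ p ∈ S, MvPolynomial.eval (pt4 p) f = 0}
  add_mem' := by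
    intro a b ha hb p hp
    simp only [Set.mem_setOf_eq] at ha hb ⊢
    simp [map_add, ha p hp, hb p hp]
  zero_mem' := by intro p hp; simp
  smul_mem' := by
    intro c f hf p hp
    simp only [Set.mem_setOf_eq] at hf ⊢
    simp [smul_eq_mul, map_mul, hf p hp]

/-- A subset of `ℂ⁴` is irreducible if its vanishing ideal is prime. -/
def IsIrr4 (S : Set ((ℂ × ℂ) × (ℂ × ℂ))) : Prop := (vanIdeal4 S).IsPrime

/-- The dimension of a subset of `ℂ⁴`: the Krull dimension of the quotient of
`ℂ[x₁, x₂, x₃, x₄]` by its vanishing ideal. -/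
def dim4 (S : Set ((ℂ × ℂ) × (ℂ × ℂ))) : WithBot (WithTop ℕ) :=
  ringKrullDim (MvPolynomial (Fin 4) ℂ ⧸ vanIdeal4 S)

end

/-- `Γ` for three base points: pairs `(p₀, q₀)` with `d(p₀, p_w) = d(q₀, q_w)`
for `w = 1, 2, 3`. -/
def Gamma3 (p1 p2 p3 q1 q2 q3 : ℂ × ℂ) : Set ((ℂ × ℂ) × (ℂ × ℂ)) :=
  {pq | sd pq.1 p1 = sd pq.2 q1 ∧ sd pq.1 p2 = sd pq.2 q2 ∧
    sd pq.1 p3 = sd pq.2 q3}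

/-- `Γ'`: the pairs in `Γ` for which some transformation `t ∈ T` sends
`(p₀, p₁, p₂)` to `(q₀, q₁, q₂)`. -/
def Gamma3' (p1 p2 p3 q1 q2 q3 : ℂ × ℂ) : Set ((ℂ × ℂ) × (ℂ × ℂ)) :=
  {pq ∈ Gamma3 p1 p2 p3 q1 q2 q3 |
    ∃ t, IsTransf t ∧ t pq.1 = pq.2 ∧ t p1 = q1 ∧ t p2 = q2}


-- ===== auxiliary lemmas =====


open Polynomial in
lemma ringKrullDim_polynomial_complex : ringKrullDim (Polynomial ℂ) = 1 := by
  apply le_antisymm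
  · apply iSup_le
    intro p
    suffices h : p.length ≤ 1 by exact_mod_cast Nat.cast_le.mpr h
    by_contra hlen
    push_neg at hlen
    have h2 : 2 ≤ p.length := hlen
    set i0 : Fin (p.length + 1) := ⟨0, by omega⟩
    set i1 : Fin (p.length + 1) := ⟨1, by omega⟩
    set i2 : Fin (p.length + 1) := ⟨2, by omega⟩
    have h01 : p.toFun i0 < p.toFun i1 := p.strictMono (by simp [i0, i1, Fin.lt_def])
    have h12 : p.toFun i1 < p.toFun i2 := p.strictMono (by simp [i1, i2, Fin.lt_def])
    have h01' : (p.toFun i0).asIdeal < (p.toFun i1).asIdeal :=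
      (PrimeSpectrum.asIdeal_lt_asIdeal _ _).mpr h01
    have h12' : (p.toFun i1).asIdeal < (p.toFun i2).asIdeal :=
      (PrimeSpectrum.asIdeal_lt_asIdeal _ _).mpr h12
    have hne : (p.toFun i1).asIdeal ≠ ⊥ := by
      intro hb
      rw [hb] at h01'
      exact absurd h01' (by simp)
    have hmax : (p.toFun i1).asIdeal.IsMaximal := by
      haveI := (p.toFun i1).isPrime
      exact IsPrime.to_maximal_ideal hne
    exact absurd (Ideal.IsMaximal.eq_of_le hmax (Ideal.IsPrime.ne_top (p.toFun i2).isPrime)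
      h12'.le) h12'.ne
  · have hX : Prime (X : Polynomial ℂ) := prime_X
    have hprime : (Ideal.span {(X : Polynomial ℂ)}).IsPrime :=
      (Ideal.span_singleton_prime X_ne_zero).mpr hX
    let c : LTSeries (PrimeSpectrum (Polynomial ℂ)) :=
      ⟨1, ![⟨⊥, Ideal.bot_prime⟩, ⟨Ideal.span {X}, hprime⟩], by
        intro i
        fin_cases i
        show (⟨⊥, _⟩ : PrimeSpectrum (Polynomial ℂ)) < ⟨Ideal.span {X}, hprime⟩
        rw [← PrimeSpectrum.asIdeal_lt_asIdeal]
        exact bot_lt_iff_ne_bot.mpr (by simp [Ideal.span_singleton_eq_bot, X_ne_zero])⟩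
    have := Order.LTSeries.length_le_krullDim c
    simpa [c] using this

variable {R : Type*} [CommRing R]

lemma quot_inf_le_aux (I : Ideal R) (P : LTSeries (PrimeSpectrum (R ⧸ I)))
    (K : Ideal R) (hK : K ≤ Ideal.comap (Ideal.Quotient.mk I) (P.toFun 0).asIdeal) :
    (P.length : WithBot (WithTop ℕ)) ≤ ringKrullDim (R ⧸ K) := by
  set mkI := Ideal.Quotient.mk I
  set mkK := Ideal.Quotient.mk K
  have hsurjI : Function.Surjective mkI := Ideal.Quotient.mk_surjective
  have hsurjK : Function.Surjective mkK := Ideal.Quotient.mk_surjective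
  set Q : Fin (P.length + 1) → Ideal R := fun i => Ideal.comap mkI (P.toFun i).asIdeal with hQ
  have hQmono : StrictMono Q := by
    intro i j hij
    have h1 : Q i ≤ Q j := Ideal.comap_mono (P.strictMono hij).le
    have h2 : Q i ≠ Q j := fun h => (P.strictMono hij).ne
      ((PrimeSpectrum.ext_iff).mpr (Ideal.comap_injective_of_surjective mkI hsurjI h))
    exact lt_of_le_of_ne h1 h2
  have hKQ : ∀ i, K ≤ Q i := by
    intro i
    refine le_trans hK ?_
    rcases eq_or_lt_of_le (Fin.zero_le i) with h | h
    · exact le_of_eq (congrArg Q h)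
    · exact (hQmono h).le
  have hKerQ : ∀ i, RingHom.ker mkK ≤ Q i := fun i => by
    rw [Ideal.mk_ker]; exact hKQ i
  have hprime : ∀ i, (Ideal.map mkK (Q i)).IsPrime := fun i =>
    Ideal.map_isPrime_of_surjective hsurjK (hKerQ i)
  let F : LTSeries (PrimeSpectrum (R ⧸ K)) :=
    ⟨P.length, fun i => ⟨Ideal.map mkK (Q i), hprime i⟩, by
      intro i
      show (_ : PrimeSpectrum (R ⧸ K)) < _
      rw [← PrimeSpectrum.asIdeal_lt_asIdeal]
      have hlt : Q i.castSucc < Q i.succ := hQmono (by simp [Fin.lt_def])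
      refine lt_of_le_of_ne (Ideal.map_mono hlt.le) (fun h => hlt.ne ?_)
      have e1 := Ideal.comap_map_of_surjective mkK hsurjK (Q i.castSucc)
      have e2 := Ideal.comap_map_of_surjective mkK hsurjK (Q i.succ)
      rw [show Ideal.comap mkK ⊥ = K by rw [← RingHom.ker_eq_comap_bot, Ideal.mk_ker]] at e1 e2
      have h2 : Ideal.comap mkK (Ideal.map mkK (Q i.castSucc)) =
          Ideal.comap mkK (Ideal.map mkK (Q i.succ)) := congrArg (Ideal.comap mkK) h
      rw [e1, e2] at h2
      rwa [sup_eq_left.mpr (hKQ _), sup_eq_left.mpr (hKQ _)] at h2⟩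
  exact Order.LTSeries.length_le_krullDim F

lemma ringKrullDim_quot_inf_le (I J : Ideal R) :
    ringKrullDim (R ⧸ (I ⊓ J)) ≤ max (ringKrullDim (R ⧸ I)) (ringKrullDim (R ⧸ J)) := by
  apply iSup_le
  intro P
  have hmem : I ⊓ J ≤ Ideal.comap (Ideal.Quotient.mk (I ⊓ J)) (P.toFun 0).asIdeal := by
    intro x hx
    simp only [Ideal.mem_comap]
    rw [show Ideal.Quotient.mk (I ⊓ J) x = 0 from Ideal.Quotient.eq_zero_iff_mem.mpr hx]
    exact (P.toFun 0).asIdeal.zero_mem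
  have hp : (Ideal.comap (Ideal.Quotient.mk (I ⊓ J)) (P.toFun 0).asIdeal).IsPrime :=
    Ideal.IsPrime.comap _
  rcases hp.inf_le.mp hmem with h | h
  · exact le_trans (quot_inf_le_aux (I ⊓ J) P I h) (le_max_left _ _)
  · exact le_trans (quot_inf_le_aux (I ⊓ J) P J h) (le_max_right _ _)


noncomputable section LineSpec


open Polynomial MvPolynomial

variable (a b : Fin 4 → ℂ)

/-- The parametrized affine line. -/
def lineSet : Set ((ℂ × ℂ) × (ℂ × ℂ)) :=
  Set.range fun r : ℂ => ((a 0 * r + b 0, a 1 * r + b 1), (a 2 * r + b 2, a 3 * r + b 3))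

def linePhi : MvPolynomial (Fin 4) ℂ →ₐ[ℂ] Polynomial ℂ :=
  MvPolynomial.aeval (fun j => Polynomial.C (b j) + Polynomial.C (a j) * Polynomial.X)

lemma linePhi_eval (f : MvPolynomial (Fin 4) ℂ) (r : ℂ) :
    Polynomial.eval r (linePhi a b f) = MvPolynomial.eval (fun j => a j * r + b j) f := by
  induction f using MvPolynomial.induction_on with
  | C c => simp [linePhi]
  | add f g hf hg => simp only [map_add, Polynomial.eval_add, hf, hg]
  | mul_X f j hf =>
      rw [map_mul, Polynomial.eval_mul, hf, MvPolynomial.eval_mul]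
      congr 1
      show Polynomial.eval r (MvPolynomial.aeval _ (MvPolynomial.X j)) = _
      rw [MvPolynomial.aeval_X]
      simp [MvPolynomial.eval_X]
      ring

lemma pt4_line (r : ℂ) :
    pt4 ((a 0 * r + b 0, a 1 * r + b 1), (a 2 * r + b 2, a 3 * r + b 3)) =
    fun j => a j * r + b j := by
  funext j
  fin_cases j <;> rfl

lemma vanIdeal4_lineSet : vanIdeal4 (lineSet a b) = RingHom.ker (linePhi a b) := by
  ext f
  constructor
  · intro hf
    have h : ∀ r : ℂ, Polynomial.eval r (linePhi a b f) = 0 := by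
      intro r
      rw [linePhi_eval, ← pt4_line a b r]
      exact hf _ ⟨r, rfl⟩
    rw [RingHom.mem_ker]
    exact Polynomial.funext fun r => by rw [h r]; simp
  · intro hf p hp
    obtain ⟨r, rfl⟩ := hp
    rw [pt4_line, ← linePhi_eval, RingHom.mem_ker.mp hf]
    simp

lemma linePhi_surjective (i : Fin 4) (hi : a i ≠ 0) : Function.Surjective (linePhi a b) := by
  rw [← AlgHom.range_eq_top]
  rw [← top_le_iff, ← Polynomial.adjoin_X (R := ℂ)]
  apply Algebra.adjoin_le
  rintro x hx
  rw [Set.mem_singleton_iff] at hx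
  subst hx
  refine ⟨MvPolynomial.C (a i)⁻¹ * (MvPolynomial.X i - MvPolynomial.C (b i)), ?_⟩
  show (linePhi a b) (MvPolynomial.C (a i)⁻¹ * (MvPolynomial.X i - MvPolynomial.C (b i)))
      = Polynomial.X
  have h1 : (linePhi a b) (MvPolynomial.C (a i)⁻¹ * (MvPolynomial.X i - MvPolynomial.C (b i)))
      = Polynomial.C (a i)⁻¹ * (Polynomial.C (a i) * Polynomial.X) := by
    simp only [map_mul, map_sub, linePhi, MvPolynomial.aeval_X, MvPolynomial.aeval_C]
    simp only [Polynomial.algebraMap_eq]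
    ring
  rw [h1, ← mul_assoc, ← Polynomial.C_mul, inv_mul_cancel₀ hi]
  simp

lemma lineSet_spec (i : Fin 4) (hi : a i ≠ 0) :
    IsIrr4 (lineSet a b) ∧ dim4 (lineSet a b) = 1 := by
  have hker := vanIdeal4_lineSet a b
  have hsurj := linePhi_surjective a b i hi
  constructor
  · rw [IsIrr4, hker]
    exact RingHom.ker_isPrime _
  · rw [dim4, hker]
    have e := RingHom.quotientKerEquivOfSurjective
      (f := (linePhi a b : MvPolynomial (Fin 4) ℂ →+* Polynomial ℂ)) hsurj
    have : RingHom.ker ((linePhi a b : MvPolynomial (Fin 4) ℂ →+* Polynomial ℂ)) =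
        RingHom.ker (linePhi a b) := rfl
    rw [← this, ringKrullDim_eq_of_ringEquiv e]
    exact ringKrullDim_polynomial_complex


end LineSpec


lemma two_sols (v1 v2 w1 w2 a1 a2 b1 b2 d : ℂ) (hd : d ≠ 0)
    (hv : v1^2+v2^2 = d) (hw : w1^2+w2^2 = d)
    (h1 : a1^2+a2^2 = b1^2+b2^2) (h2 : a1*v1+a2*v2 = b1*w1+b2*w2) :
    (d*b1 = (v1*w1+v2*w2)*a1 - (v1*w2-v2*w1)*a2 ∧
     d*b2 = (v1*w2-v2*w1)*a1 + (v1*w1+v2*w2)*a2) ∨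
    (d*b1 = (v1*w1-v2*w2)*a1 + (v1*w2+v2*w1)*a2 ∧
     d*b2 = (v1*w2+v2*w1)*a1 - (v1*w1-v2*w2)*a2) := by
  set U1 := d*b1 - ((v1*w1+v2*w2)*a1 - (v1*w2-v2*w1)*a2) with hU1
  set U2 := d*b2 - ((v1*w2-v2*w1)*a1 + (v1*w1+v2*w2)*a2) with hU2
  set V1 := d*b1 - ((v1*w1-v2*w2)*a1 + (v1*w2+v2*w1)*a2) with hV1
  set V2 := d*b2 - ((v1*w2+v2*w1)*a1 - (v1*w1-v2*w2)*a2) with hV2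
  have hUw : U1*w1 + U2*w2 = 0 := by
    rw [hU1, hU2]; linear_combination (-d)*h2 - (a1*v1+a2*v2)*hw
  have hVw : V1*w1 + V2*w2 = 0 := by
    rw [hV1, hV2]; linear_combination (-d)*h2 - (a1*v1+a2*v2)*hw
  have key : U1*V1 + U2*V2 = 0 := by
    rw [hU1, hU2, hV1, hV2]
    linear_combination (-(d^2))*h1 + (2*d*(a1*v1+a2*v2))*h2 + (-(d*(a1^2+a2^2)))*hv +
      ((v1^2-v2^2)*(a1^2-a2^2)+4*v1*v2*a1*a2)*hw
  have hdU1 : d*U1 = -((U2*w1 - U1*w2)*w2) := by linear_combination w1*hUw - U1*hw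
  have hdU2 : d*U2 = (U2*w1 - U1*w2)*w1 := by linear_combination w2*hUw - U2*hw
  have hdV1 : d*V1 = -((V2*w1 - V1*w2)*w2) := by linear_combination w1*hVw - V1*hw
  have hdV2 : d*V2 = (V2*w1 - V1*w2)*w1 := by linear_combination w2*hVw - V2*hw
  have e1 : (d*U1)*(d*V1) = ((U2*w1-U1*w2)*w2) * ((V2*w1-V1*w2)*w2) := by
    rw [hdU1, hdV1]; ring
  have e2 : (d*U2)*(d*V2) = ((U2*w1-U1*w2)*w1) * ((V2*w1-V1*w2)*w1) := by
    rw [hdU2, hdV2]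
  have e3 : (U2*w1-U1*w2) * (V2*w1-V1*w2) * (w1^2+w2^2) = d^2*(U1*V1+U2*V2) := by
    linear_combination (-1 : ℂ)*e1 - e2
  rw [hw, key, mul_zero] at e3
  rcases mul_eq_zero.mp e3 with h | h
  · rcases mul_eq_zero.mp h with h | h
    · left
      have z1 : U1 = 0 := by
        have := hdU1; rw [h] at this
        simpa [hd] using mul_eq_zero.mp (by linear_combination this : d * U1 = 0)
      have z2 : U2 = 0 := by
        have := hdU2; rw [h] at this
        simpa [hd] using mul_eq_zero.mp (by linear_combination this : d * U2 = 0)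
      constructor
      · rw [hU1] at z1; linear_combination z1
      · rw [hU2] at z2; linear_combination z2
    · right
      have z1 : V1 = 0 := by
        have := hdV1; rw [h] at this
        simpa [hd] using mul_eq_zero.mp (by linear_combination this : d * V1 = 0)
      have z2 : V2 = 0 := by
        have := hdV2; rw [h] at this
        simpa [hd] using mul_eq_zero.mp (by linear_combination this : d * V2 = 0)
      constructor
      · rw [hV1] at z1; linear_combination z1
      · rw [hV2] at z2; linear_combination z2
  · exact absurd h hd


noncomputable section TauSetup

def tau (p1 q1 : ℂ × ℂ) (ε c s : ℂ) (x : ℂ × ℂ) : ℂ × ℂ :=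
  (c * (x.1 - p1.1) - ε * s * (x.2 - p1.2) + q1.1,
   s * (x.1 - p1.1) + ε * c * (x.2 - p1.2) + q1.2)

variable {p1 q1 p3 q3 : ℂ × ℂ} {ε c s : ℂ}

lemma tau_sd (hcs : c ^ 2 + s ^ 2 = 1) (hε : ε ^ 2 = 1) (x y : ℂ × ℂ) :
    sd (tau p1 q1 ε c s x) (tau p1 q1 ε c s y) = sd x y := by
  simp only [sd, tau]
  linear_combination ((x.1 - y.1) ^ 2 + ε ^ 2 * (x.2 - y.2) ^ 2) * hcs +
    ((x.2 - y.2) ^ 2) * hε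

lemma tau_fst : tau p1 q1 ε c s p1 = q1 := by
  rw [Prod.ext_iff]
  constructor <;> (simp only [tau]; ring)

lemma graph_line_form (σ : (ℂ × ℂ) → (ℂ × ℂ)) (g1 g2 g3 g4 g5 g6 : ℂ)
    (hσ : ∀ x, σ x = (g1 * x.1 + g2 * x.2 + g3, g4 * x.1 + g5 * x.2 + g6))
    (p3 q3 : ℂ × ℂ) (A B C : ℂ) (hAB : A ≠ 0 ∨ B ≠ 0)
    (hlin : ∀ x : ℂ × ℂ, sd x p3 - sd (σ x) q3 = A * x.1 + B * x.2 + C) :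
    ∃ a b : Fin 4 → ℂ, ∃ i : Fin 4, a i ≠ 0 ∧
      {pq : (ℂ × ℂ) × (ℂ × ℂ) | pq.2 = σ pq.1 ∧ sd pq.1 p3 = sd pq.2 q3} = lineSet a b := by
  rcases hAB with hA | hB
  · refine ⟨![-B/A, 1, g1*(-B/A)+g2, g4*(-B/A)+g5], ![-C/A, 0, g1*(-C/A)+g3, g4*(-C/A)+g6],
      1, one_ne_zero, ?_⟩
    apply Set.Subset.antisymm
    · rintro ⟨⟨x, y⟩, z, u⟩ ⟨h2, h3⟩
      simp only [Set.mem_setOf_eq] at h2 h3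
      rw [hσ (x, y), Prod.ext_iff] at h2
      simp only at h2 h3
      obtain ⟨hz, hu⟩ := h2
      have hline : A * x + B * y + C = 0 := by
        have := hlin (x, y)
        rw [hσ (x, y)] at this
        simp only at this
        rw [← this, ← hz, ← hu, h3]
        ring
      have hx : x = -B/A * y + -C/A := by
        have h' : x = (-B * y + -C) / A := by
          rw [eq_div_iff hA]; linear_combination hline
        rw [h']; ring
      refine ⟨y, ?_⟩
      simp only [lineSet, Matrix.cons_val_zero, Matrix.cons_val_one, Matrix.head_cons,
        Prod.mk.injEq, Matrix.cons_val_two, Matrix.tail_cons, Matrix.cons_val_three]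
      refine ⟨⟨by rw [hx], by ring⟩, ?_, ?_⟩
      · rw [hz, hx]; ring
      · rw [hu, hx]; ring
    · rintro pq ⟨r, rfl⟩
      simp only [Matrix.cons_val_zero, Matrix.cons_val_one, Matrix.head_cons,
        Matrix.cons_val_two, Matrix.tail_cons, Matrix.cons_val_three]
      have h2' : (((g1*(-B/A)+g2) * r + (g1*(-C/A)+g3), (g4*(-B/A)+g5) * r + (g4*(-C/A)+g6)) : ℂ × ℂ)
          = σ ((-B/A) * r + (-C/A), 1 * r + 0) := by
        rw [hσ, Prod.ext_iff]
        constructor <;> (simp only; ring)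
      constructor
      · exact h2'
      · show sd _ p3 = sd _ q3
        rw [h2']
        have := hlin ((-B/A) * r + (-C/A), 1 * r + 0)
        have hz : A * ((-B/A) * r + (-C/A)) + B * (1 * r + 0) + C = 0 := by
          field_simp
          ring
        simp only at this
        rw [hz, sub_eq_zero] at this
        exact this
  · refine ⟨![1, -A/B, g1+g2*(-A/B), g4+g5*(-A/B)], ![0, -C/B, g2*(-C/B)+g3, g5*(-C/B)+g6],
      0, one_ne_zero, ?_⟩
    apply Set.Subset.antisymm
    · rintro ⟨⟨x, y⟩, z, u⟩ ⟨h2, h3⟩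
      simp only [Set.mem_setOf_eq] at h2 h3
      rw [hσ (x, y), Prod.ext_iff] at h2
      simp only at h2 h3
      obtain ⟨hz, hu⟩ := h2
      have hline : A * x + B * y + C = 0 := by
        have := hlin (x, y)
        rw [hσ (x, y)] at this
        simp only at this
        rw [← this, ← hz, ← hu, h3]
        ring
      have hy : y = -A/B * x + -C/B := by
        have h' : y = (-A * x + -C) / B := by
          rw [eq_div_iff hB]; linear_combination hline
        rw [h']; ring
      refine ⟨x, ?_⟩
      simp only [lineSet, Matrix.cons_val_zero, Matrix.cons_val_one, Matrix.head_cons,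
        Prod.mk.injEq, Matrix.cons_val_two, Matrix.tail_cons, Matrix.cons_val_three]
      refine ⟨⟨by ring, by rw [hy]⟩, ?_, ?_⟩
      · rw [hz, hy]; ring
      · rw [hu, hy]; ring
    · rintro pq ⟨r, rfl⟩
      simp only [Matrix.cons_val_zero, Matrix.cons_val_one, Matrix.head_cons,
        Matrix.cons_val_two, Matrix.tail_cons, Matrix.cons_val_three]
      have h2' : (((g1+g2*(-A/B)) * r + (g2*(-C/B)+g3), (g4+g5*(-A/B)) * r + (g5*(-C/B)+g6)) : ℂ × ℂ)
          = σ (1 * r + 0, (-A/B) * r + (-C/B)) := by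
        rw [hσ, Prod.ext_iff]
        constructor <;> (simp only; ring)
      constructor
      · exact h2'
      · show sd _ p3 = sd _ q3
        rw [h2']
        have := hlin (1 * r + 0, (-A/B) * r + (-C/B))
        have hz : A * (1 * r + 0) + B * ((-A/B) * r + (-C/B)) + C = 0 := by
          field_simp
          ring
        simp only at this
        rw [hz, sub_eq_zero] at this
        exact this


lemma tau_line_form (hcs : c ^ 2 + s ^ 2 = 1) (hε : ε ^ 2 = 1)
    (hne : sd p1 p3 ≠ sd q1 q3) :
    ∃ a b : Fin 4 → ℂ, ∃ i : Fin 4, a i ≠ 0 ∧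
      {pq : (ℂ × ℂ) × (ℂ × ℂ) | pq.2 = tau p1 q1 ε c s pq.1 ∧ sd pq.1 p3 = sd pq.2 q3}
        = lineSet a b := by
  set e := q1.1 - c * p1.1 + ε * s * p1.2 - q3.1 with he
  set f := q1.2 - s * p1.1 - ε * c * p1.2 - q3.2 with hf
  apply graph_line_form (tau p1 q1 ε c s) c (-(ε*s)) (q1.1 - c*p1.1 + ε*s*p1.2)
    s (ε*c) (q1.2 - s*p1.1 - ε*c*p1.2)
    (fun x => by rw [tau, Prod.ext_iff]; constructor <;> (simp only; ring))
    p3 q3 (-2*p3.1 - 2*(c*e + s*f)) (-2*p3.2 - 2*ε*(c*f - s*e))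
    (p3.1^2 + p3.2^2 - e^2 - f^2)
  · by_contra hcon
    push_neg at hcon
    obtain ⟨hA0, hB0⟩ := hcon
    apply hne
    have hA : p3.1 = -(c*e + s*f) := by linear_combination (-1/2 : ℂ) * hA0
    have hB : p3.2 = -(ε*(c*f - s*e)) := by linear_combination (-1/2 : ℂ) * hB0
    have hK : c*e + s*f = c*(q1.1 - q3.1) + s*(q1.2 - q3.2) - p1.1 := by
      rw [he, hf]; linear_combination (-(p1.1)) * hcs
    have hM : ε*(c*f - s*e) = ε*(c*(q1.2 - q3.2) - s*(q1.1 - q3.1)) - p1.2 := by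
      rw [he, hf]; linear_combination (-(p1.2)*ε^2) * hcs + (-(p1.2)) * hε
    show sd p1 p3 = sd q1 q3
    simp only [sd]
    rw [hA, hB, hK, hM]
    linear_combination ((q1.1-q3.1)^2 + (q1.2-q3.2)^2) * hcs +
      ((c*(q1.2-q3.2) - s*(q1.1-q3.1))^2) * hε
  · intro x
    simp only [sd, tau, he, hf]
    linear_combination (-(x.1^2) - ε^2*x.2^2) * hcs + (-(x.2^2)) * hε

end TauSetup

lemma vanIdeal4_union (S T : Set ((ℂ × ℂ) × (ℂ × ℂ))) :
    vanIdeal4 (S ∪ T) = vanIdeal4 S ⊓ vanIdeal4 T := by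
  ext f
  rw [Submodule.mem_inf]
  constructor
  · intro h
    exact ⟨fun p hp => h p (Or.inl hp), fun p hp => h p (Or.inr hp)⟩
  · rintro ⟨h1, h2⟩ p hp
    rcases hp with hp | hp
    exacts [h1 p hp, h2 p hp]

lemma dim4_mono {S T : Set ((ℂ × ℂ) × (ℂ × ℂ))} (h : S ⊆ T) : dim4 S ≤ dim4 T := by
  have hIdeal : vanIdeal4 T ≤ vanIdeal4 S := fun f hf p hp => hf p (h hp)
  have hsurj : Function.Surjective (Ideal.Quotient.factor hIdeal) := fun x => by
    obtain ⟨y, rfl⟩ := Ideal.Quotient.mk_surjective x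
    exact ⟨Ideal.Quotient.mk _ y, Ideal.Quotient.factor_mk hIdeal y⟩
  exact ringKrullDim_le_of_surjective _ hsurj

lemma dim4_union_le (S T : Set ((ℂ × ℂ) × (ℂ × ℂ))) :
    dim4 (S ∪ T) ≤ max (dim4 S) (dim4 T) := by
  unfold dim4
  rw [vanIdeal4_union]
  exact ringKrullDim_quot_inf_le _ _


/-- If `p₁, p₂, p₃` are not collinear,
`d(p₁, p₂) = d(q₁, q₂) ≠ 0`, `d(p₂, p₃) = d(q₂, q₃)` and
`d(p₁, p₃) ≠ d(q₁, q₃)`, then `Γ'` is irreducible and `dim Γ = dim Γ' = 1`. -/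
theorem gamma_three_points_two_equal_lengths (p1 p2 p3 q1 q2 q3 : ℂ × ℂ)
    (hcol : LinearIndependent ℂ ![p2 - p1, p3 - p1])
    (h12 : sd p1 p2 = sd q1 q2) (h12ne : sd p1 p2 ≠ 0)
    (h23 : sd p2 p3 = sd q2 q3)
    (h13 : sd p1 p3 ≠ sd q1 q3) :
    IsIrr4 (Gamma3' p1 p2 p3 q1 q2 q3) ∧
    dim4 (Gamma3 p1 p2 p3 q1 q2 q3) = 1 ∧
    dim4 (Gamma3' p1 p2 p3 q1 q2 q3) = 1 := by
  set v1 := p2.1 - p1.1 with hv1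
  set v2 := p2.2 - p1.2 with hv2
  set w1 := q2.1 - q1.1 with hw1
  set w2 := q2.2 - q1.2 with hw2
  have hv : v1^2 + v2^2 = sd p1 p2 := by rw [hv1, hv2]; simp only [sd]; ring
  have hw : w1^2 + w2^2 = sd p1 p2 := by rw [hw1, hw2, h12]; simp only [sd]; ring
  set c := (v1*w1 + v2*w2)/(sd p1 p2) with hc
  set s := (v1*w2 - v2*w1)/(sd p1 p2) with hs
  set c' := (v1*w1 - v2*w2)/(sd p1 p2) with hc'
  set s' := (v1*w2 + v2*w1)/(sd p1 p2) with hs'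
  have hcs : c^2 + s^2 = 1 := by
    rw [hc, hs]
    field_simp
    linear_combination (w1^2 + w2^2) * hv + (sd p1 p2) * hw
  have hcs' : c'^2 + s'^2 = 1 := by
    rw [hc', hs']
    field_simp
    linear_combination (w1^2 + w2^2) * hv + (sd p1 p2) * hw
  set t := tau p1 q1 1 c s with ht
  set t' := tau p1 q1 (-1) c' s' with ht'
  have ht2 : t p2 = q2 := by
    rw [ht, tau, Prod.ext_iff]
    constructor
    · show c * (p2.1 - p1.1) - 1 * s * (p2.2 - p1.2) + q1.1 = q2.1
      rw [← hv1, ← hv2, hc, hs]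
      field_simp
      linear_combination w1 * hv
    · show s * (p2.1 - p1.1) + 1 * c * (p2.2 - p1.2) + q1.2 = q2.2
      rw [← hv1, ← hv2, hc, hs]
      field_simp
      linear_combination w2 * hv
  have ht2' : t' p2 = q2 := by
    rw [ht', tau, Prod.ext_iff]
    constructor
    · show c' * (p2.1 - p1.1) - (-1) * s' * (p2.2 - p1.2) + q1.1 = q2.1
      rw [← hv1, ← hv2, hc', hs']
      field_simp
      linear_combination w1 * hv
    · show s' * (p2.1 - p1.1) + (-1) * c' * (p2.2 - p1.2) + q1.2 = q2.2
      rw [← hv1, ← hv2, hc', hs']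
      field_simp
      linear_combination w2 * hv
  set Lr := {pq : (ℂ × ℂ) × (ℂ × ℂ) | pq.2 = t pq.1 ∧ sd pq.1 p3 = sd pq.2 q3} with hLrdef
  set Ls := {pq : (ℂ × ℂ) × (ℂ × ℂ) | pq.2 = t' pq.1 ∧ sd pq.1 p3 = sd pq.2 q3} with hLsdef
  have hone : ((1:ℂ))^2 = 1 := by norm_num
  have hmone : ((-1:ℂ))^2 = 1 := by norm_num
  have hLsub : Lr ∪ Ls ⊆ Gamma3 p1 p2 p3 q1 q2 q3 := by
    rintro ⟨P, Q⟩ (⟨h2, h3⟩ | ⟨h2, h3⟩)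
    · simp only [Set.mem_setOf_eq] at h2 h3
      refine ⟨?_, ?_, h3⟩
      · show sd P p1 = sd Q q1
        have hx := tau_sd (p1 := p1) (q1 := q1) hcs hone P p1
        rw [tau_fst] at hx
        rw [← ht] at hx
        rw [h2]
        exact hx.symm
      · show sd P p2 = sd Q q2
        have hx := tau_sd (p1 := p1) (q1 := q1) hcs hone P p2
        rw [← ht] at hx
        rw [ht2] at hx
        rw [h2]
        exact hx.symm
    · simp only [Set.mem_setOf_eq] at h2 h3
      refine ⟨?_, ?_, h3⟩
      · show sd P p1 = sd Q q1
        have hx := tau_sd (p1 := p1) (q1 := q1) hcs' hmone P p1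
        rw [tau_fst] at hx
        rw [← ht'] at hx
        rw [h2]
        exact hx.symm
      · show sd P p2 = sd Q q2
        have hx := tau_sd (p1 := p1) (q1 := q1) hcs' hmone P p2
        rw [← ht'] at hx
        rw [ht2'] at hx
        rw [h2]
        exact hx.symm
  have hGamma : Gamma3 p1 p2 p3 q1 q2 q3 = Lr ∪ Ls := by
    apply Set.Subset.antisymm _ hLsub
    rintro ⟨P, Q⟩ ⟨hg1, hg2, hg3⟩
    simp only [Set.mem_setOf_eq] at hg1 hg2 hg3
    have e1 : (P.1 - p1.1)^2 + (P.2 - p1.2)^2 = (Q.1 - q1.1)^2 + (Q.2 - q1.2)^2 := by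
      have := hg1; simp only [sd] at this; exact this
    have e2 : (P.1 - p1.1)*v1 + (P.2 - p1.2)*v2 = (Q.1 - q1.1)*w1 + (Q.2 - q1.2)*w2 := by
      have t1 := hg1; have t2 := hg2
      simp only [sd] at t1 t2
      have t3 := h12; simp only [sd] at t3
      rw [hv1, hv2, hw1, hw2]
      linear_combination (1/2 : ℂ) * t1 - (1/2 : ℂ) * t2 + (1/2 : ℂ) * t3
    rcases two_sols v1 v2 w1 w2 (P.1 - p1.1) (P.2 - p1.2) (Q.1 - q1.1) (Q.2 - q1.2)
      (sd p1 p2) h12ne hv hw e1 e2 with ⟨hb1, hb2⟩ | ⟨hb1, hb2⟩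
    · left
      refine ⟨?_, hg3⟩
      show Q = t P
      rw [ht, tau, Prod.ext_iff]
      constructor
      · show Q.1 = c * (P.1 - p1.1) - 1 * s * (P.2 - p1.2) + q1.1
        rw [hc, hs]
        field_simp
        linear_combination hb1
      · show Q.2 = s * (P.1 - p1.1) + 1 * c * (P.2 - p1.2) + q1.2
        rw [hc, hs]
        field_simp
        linear_combination hb2
    · right
      refine ⟨?_, hg3⟩
      show Q = t' P
      rw [ht', tau, Prod.ext_iff]
      constructor
      · show Q.1 = c' * (P.1 - p1.1) - (-1) * s' * (P.2 - p1.2) + q1.1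
        rw [hc', hs']
        field_simp
        linear_combination hb1
      · show Q.2 = s' * (P.1 - p1.1) + (-1) * c' * (P.2 - p1.2) + q1.2
        rw [hc', hs']
        field_simp
        linear_combination hb2
  have hGamma' : Gamma3' p1 p2 p3 q1 q2 q3 = Lr := by
    apply Set.Subset.antisymm
    · rintro ⟨P, Q⟩ ⟨hmem, tt, ⟨c2, s2, u2, u3, hcs2, htt⟩, htP, htp1, htp2⟩
      have hp1c := htp1
      have hp2c := htp2
      rw [htt p1, Prod.ext_iff] at hp1c
      rw [htt p2, Prod.ext_iff] at hp2c
      simp only at hp1c hp2c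
      have hA1 : c2*v1 - s2*v2 = w1 := by
        simp only [hv1, hv2, hw1, hw2]
        linear_combination hp2c.1 - hp1c.1
      have hA2 : s2*v1 + c2*v2 = w2 := by
        simp only [hv1, hv2, hw1, hw2]
        linear_combination hp2c.2 - hp1c.2
      have hc2 : c2 = c := by
        rw [hc, eq_div_iff h12ne]
        rw [← hv]
        linear_combination v1 * hA1 + v2 * hA2
      have hs2 : s2 = s := by
        rw [hs, eq_div_iff h12ne]
        rw [← hv]
        linear_combination (-v2) * hA1 + v1 * hA2
      have hu2 : u2 = q1.1 - c*p1.1 + s*p1.2 := by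
        rw [← hc2, ← hs2]
        linear_combination hp1c.1
      have hu3 : u3 = q1.2 - s*p1.1 - c*p1.2 := by
        rw [← hc2, ← hs2]
        linear_combination hp1c.2
      refine ⟨?_, hmem.2.2⟩
      show Q = t P
      have htP' : tt P = Q := htP
      rw [← htP', htt P, ht, tau, Prod.ext_iff]
      constructor
      · show c2 * P.1 - s2 * P.2 + u2 = c * (P.1 - p1.1) - 1 * s * (P.2 - p1.2) + q1.1
        rw [hc2, hs2, hu2]; ring
      · show s2 * P.1 + c2 * P.2 + u3 = s * (P.1 - p1.1) + 1 * c * (P.2 - p1.2) + q1.2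
        rw [hc2, hs2, hu3]; ring
    · rintro ⟨P, Q⟩ ⟨h2, h3⟩
      simp only [Set.mem_setOf_eq] at h2 h3
      refine ⟨hLsub (Or.inl ⟨h2, h3⟩), t,
        ⟨c, s, q1.1 - c*p1.1 + s*p1.2, q1.2 - s*p1.1 - c*p1.2, hcs, fun x => by
          rw [ht, tau, Prod.ext_iff]
          constructor <;> (simp only; ring)⟩,
        h2.symm, tau_fst, ht2⟩
  obtain ⟨a, b, i, hi, hLrline⟩ := @tau_line_form p1 q1 p3 q3 1 c s hcs hone h13
  obtain ⟨a', b', i', hi', hLsline⟩ := @tau_line_form p1 q1 p3 q3 (-1) c' s' hcs' hmone h13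
  rw [← ht] at hLrline
  rw [← ht'] at hLsline
  rw [← hLrdef] at hLrline
  rw [← hLsdef] at hLsline
  have specR := lineSet_spec a b i hi
  have specS := lineSet_spec a' b' i' hi'
  refine ⟨?_, ?_, ?_⟩
  · rw [hGamma', hLrline]
    exact specR.1
  · rw [hGamma]
    apply le_antisymm
    · refine le_trans (dim4_union_le Lr Ls) ?_
      rw [hLrline, hLsline, specR.2, specS.2]
      simp
    · rw [← specR.2, hLrline]
      exact dim4_mono (by rw [← hLrline]; exact Set.subset_union_left)
  · rw [hGamma', hLrline]
    exact specR.2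
end
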